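/- arXiv:2305.17363 — 2 statements merged into one kernel-verified Lean document; each statement's English description precedes it below -/
import Mathlib

section
/- For each λ ∈ (0, λ₂], the number −iλν_λ is an eigenvalue of the transpose matrix A_{β_λ}(λ)ᵀ and its eigenspace N[A_{β_λ}(λ)ᵀ + iλν_λ I] is one-dimensional, spanned by a vector (φ̃_λ, ψ̃_λ) ∈ ℂ^{2n} of the form φ̃_λ = δ̃_λ(1,…,1)ᵀ + w̃_λ with δ̃_λ ≥ 0 and ∑_{j=1}^n ξ_j w̃_{λj} = 0, ψ̃_λ = (s̃_{1λ} + is̃_{2λ})(1,…,1)ᵀ + z̃_λ with s̃_{1λ}, s̃_{2λ} ∈ ℝ and ∑_{j=1}^n η_j z̃_{λj} = 0, normalized by ‖φ̃_λ‖₂² + ‖ψ̃_λ‖₂² = 2n. Moreover, as λ → 0 these quantities converge to δ̃₀ = √((2ν₀² + 2)/(2ν₀² + 1)), s̃_{10} = δ̃₀ν₀²/(ν₀² + 1), s̃_{20} = δ̃₀ν₀/(ν₀² + 1), w̃₀ = 0 and z̃₀ = 0. -/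
open Finset Set

/-- A real square matrix is essentially nonnegative if all off-diagonal entries
are nonnegative. -/
def EssNonneg {n : ℕ} (P : Matrix (Fin n) (Fin n) ℝ) : Prop :=
  ∀ j k, j ≠ k → 0 ≤ P j k

/-- Zero column sums. -/
def ZeroColSums {n : ℕ} (P : Matrix (Fin n) (Fin n) ℝ) : Prop :=
  ∀ k, ∑ j, P j k = 0

/-- Irreducibility of a matrix. -/
def MatIrred {n : ℕ} (P : Matrix (Fin n) (Fin n) ℝ) : Prop :=
  ∀ S : Finset (Fin n), S.Nonempty → S ≠ Finset.univ →
    ∃ j, j ∉ S ∧ ∃ k ∈ S, P j k ≠ 0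

/-- Componentwise positivity of a vector. -/
def PosVec {n : ℕ} (x : Fin n → ℝ) : Prop := ∀ j, 0 < x j

/-- The equilibrium system (E). -/
def IsEquilib {n : ℕ} (P Q : Matrix (Fin n) (Fin n) ℝ) (a b : Fin n → ℝ)
    (θ lam β : ℝ) (x y : Fin n → ℝ) : Prop :=
  ∀ j, (∑ k, P j k * x k) + lam * (a j - (β * b j + 1) * x j + (x j) ^ 2 * y j) = 0 ∧
    θ * (∑ k, Q j k * y k) + lam * (β * b j * x j - (x j) ^ 2 * y j) = 0

/-- The linearization matrix `A_β(λ)` (as a complex `2n × 2n` matrix in block form). -/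
noncomputable def Amat {n : ℕ} (P Q : Matrix (Fin n) (Fin n) ℝ) (b : Fin n → ℝ)
    (θ lam β : ℝ) (x y : Fin n → ℝ) :
    Matrix (Fin n ⊕ Fin n) (Fin n ⊕ Fin n) ℂ :=
  Matrix.fromBlocks (P.map fun t => (t : ℂ)) 0 0 ((θ : ℂ) • Q.map fun t => (t : ℂ))
    + (lam : ℂ) • Matrix.fromBlocks
        (Matrix.diagonal fun j => ((2 * x j * y j - β * b j - 1 : ℝ) : ℂ))
        (Matrix.diagonal fun j => (((x j) ^ 2 : ℝ) : ℂ))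
        (Matrix.diagonal fun j => ((β * b j - 2 * x j * y j : ℝ) : ℂ))
        (-(Matrix.diagonal fun j => (((x j) ^ 2 : ℝ) : ℂ)))

/-- `μ` is an eigenvalue of the complex matrix `A`. -/
def IsEig {m : Type*} [Fintype m] (A : Matrix m m ℂ) (μ : ℂ) : Prop :=
  ∃ v, v ≠ 0 ∧ A.mulVec v = μ • v

/-- The bracket `M₁ⱼ(δξⱼ+wⱼ) + M₂ⱼ((s₁+is₂)ηⱼ+zⱼ)` appearing in `H`. -/
noncomputable def HB1 {n : ℕ} (b ξ η : Fin n → ℝ) (β : ℝ) (x y : Fin n → ℝ)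
    (δ s1 s2 : ℝ) (w z : Fin n → ℂ) (j : Fin n) : ℂ :=
  ((2 * x j * y j - β * b j - 1 : ℝ) : ℂ) * (((δ * ξ j : ℝ) : ℂ) + w j)
    + (((x j) ^ 2 : ℝ) : ℂ) *
      (((s1 : ℂ) + (s2 : ℂ) * Complex.I) * ((η j : ℝ) : ℂ) + z j)

/-- The bracket `M₃ⱼ(δξⱼ+wⱼ) - M₂ⱼ((s₁+is₂)ηⱼ+zⱼ)` appearing in `H`. -/
noncomputable def HB3 {n : ℕ} (b ξ η : Fin n → ℝ) (β : ℝ) (x y : Fin n → ℝ)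
    (δ s1 s2 : ℝ) (w z : Fin n → ℂ) (j : Fin n) : ℂ :=
  ((β * b j - 2 * x j * y j : ℝ) : ℂ) * (((δ * ξ j : ℝ) : ℂ) + w j)
    - (((x j) ^ 2 : ℝ) : ℂ) *
      (((s1 : ℂ) + (s2 : ℂ) * Complex.I) * ((η j : ℝ) : ℂ) + z j)

/-- Component `h₁` of `H`. -/
noncomputable def Hh1 {n : ℕ} (b ξ η : Fin n → ℝ) (β : ℝ) (x y : Fin n → ℝ)
    (δ s1 s2 : ℝ) (w z : Fin n → ℂ) (ν : ℝ) : ℂ :=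
  (∑ j, HB1 b ξ η β x y δ s1 s2 w z j) - Complex.I * (ν : ℂ) * (δ : ℂ)

/-- Component `h₃` of `H`. -/
noncomputable def Hh3 {n : ℕ} (b ξ η : Fin n → ℝ) (β : ℝ) (x y : Fin n → ℝ)
    (δ s1 s2 : ℝ) (w z : Fin n → ℂ) (ν : ℝ) : ℂ :=
  (∑ j, HB3 b ξ η β x y δ s1 s2 w z j)
    - Complex.I * (ν : ℂ) * ((s1 : ℂ) + (s2 : ℂ) * Complex.I)

/-- The full system `H(δ, s₁, s₂, w, z, ν, β, λ) = 0`
(components `h₁`, `h_{2j}`, `h₃`, `h_{4j}`, `h₅`). -/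
def HZero {n : ℕ} (P Q : Matrix (Fin n) (Fin n) ℝ) (b ξ η : Fin n → ℝ)
    (θ β lam : ℝ) (x y : Fin n → ℝ) (δ s1 s2 : ℝ) (w z : Fin n → ℂ) (ν : ℝ) : Prop :=
  Hh1 b ξ η β x y δ s1 s2 w z ν = 0 ∧
  (∀ j, (∑ k, (P j k : ℂ) * w k) + (lam : ℂ) * HB1 b ξ η β x y δ s1 s2 w z j
      - Complex.I * (lam : ℂ) * (ν : ℂ) * (((δ * ξ j : ℝ) : ℂ) + w j)
      - (lam : ℂ) / (n : ℂ) * Hh1 b ξ η β x y δ s1 s2 w z ν = 0) ∧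
  Hh3 b ξ η β x y δ s1 s2 w z ν = 0 ∧
  (∀ j, (θ : ℂ) * (∑ k, (Q j k : ℂ) * z k) + (lam : ℂ) * HB3 b ξ η β x y δ s1 s2 w z j
      - Complex.I * (lam : ℂ) * (ν : ℂ) *
          (((s1 : ℂ) + (s2 : ℂ) * Complex.I) * ((η j : ℝ) : ℂ) + z j)
      - (lam : ℂ) / (n : ℂ) * Hh3 b ξ η β x y δ s1 s2 w z ν = 0) ∧
  (∑ j, Complex.normSq (((δ * ξ j : ℝ) : ℂ) + w j))
    + (∑ j, Complex.normSq (((s1 : ℂ) + (s2 : ℂ) * Complex.I) * ((η j : ℝ) : ℂ) + z j))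
    - (∑ j, (ξ j) ^ 2) - (∑ j, (η j) ^ 2) = 0

/-- Kernel of the transpose of an irreducible Laplacian-like matrix is constants. -/
lemma lap_ker_const {n : ℕ} [NeZero n] (P : Matrix (Fin n) (Fin n) ℝ)
    (hess : EssNonneg P) (hcol : ZeroColSums P) (hirr : MatIrred P)
    (w : Fin n → ℝ) (hw : ∀ k, ∑ j, P j k * w j = 0) : ∀ j k, w j = w k := by
  obtain ⟨j₀, -, hj₀⟩ := Finset.exists_max_image Finset.univ w ⟨0, Finset.mem_univ 0⟩
  set S : Finset (Fin n) := Finset.univ.filter (fun j => w j = w j₀) with hS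
  have hSmem : ∀ j, j ∈ S ↔ w j = w j₀ := by intro j; simp [hS]
  have hSuniv : S = Finset.univ := by
    by_contra hne
    obtain ⟨j₁, hj₁, k₁, hk₁, hP⟩ := hirr S ⟨j₀, (hSmem j₀).2 rfl⟩ hne
    have hwk₁ : w k₁ = w j₀ := (hSmem k₁).1 hk₁
    have hj₁k₁ : j₁ ≠ k₁ := fun h => hj₁ (h ▸ hk₁)
    have hPpos : 0 < P j₁ k₁ := lt_of_le_of_ne (hess j₁ k₁ hj₁k₁) (Ne.symm hP)
    have key : ∑ j, P j k₁ * (w j - w j₀) = 0 := by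
      have h2 := hw k₁
      have h3 := hcol k₁
      calc ∑ j, P j k₁ * (w j - w j₀)
          = (∑ j, P j k₁ * w j) - (∑ j, P j k₁) * w j₀ := by
            simp only [mul_sub, Finset.sum_sub_distrib, Finset.sum_mul]
        _ = 0 := by rw [h2, h3]; ring
    have hnonpos : ∀ j ∈ Finset.univ, P j k₁ * (w j - w j₀) ≤ 0 := by
      intro j _
      rcases eq_or_ne j k₁ with rfl | hjk
      · rw [hwk₁]; simp
      · exact mul_nonpos_of_nonneg_of_nonpos (hess j k₁ hjk)
          (by linarith [hj₀ j (Finset.mem_univ j)])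
    have hall := (Finset.sum_eq_zero_iff_of_nonpos hnonpos).1 key j₁ (Finset.mem_univ j₁)
    have : w j₁ = w j₀ := by
      have hlt : w j₁ - w j₀ ≠ 0 ∨ True := Or.inr trivial
      nlinarith [hj₀ j₁ (Finset.mem_univ j₁)]
    exact hj₁ ((hSmem j₁).2 this)
  intro j k
  have h1 : w j = w j₀ := (hSmem j).1 (hSuniv ▸ Finset.mem_univ j)
  have h2 : w k = w j₀ := (hSmem k).1 (hSuniv ▸ Finset.mem_univ k)
  rw [h1, h2]


/-- Complex version. -/
lemma lap_ker_constC {n : ℕ} [NeZero n] (P : Matrix (Fin n) (Fin n) ℝ)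
    (hess : EssNonneg P) (hcol : ZeroColSums P) (hirr : MatIrred P)
    (w : Fin n → ℂ) (hw : ∀ k, ∑ j, (P j k : ℂ) * w j = 0) : ∀ j k, w j = w k := by
  have hre : ∀ j k, (w j).re = (w k).re := by
    apply lap_ker_const P hess hcol hirr
    intro k
    have := congrArg Complex.re (hw k)
    simpa [Complex.ofReal_mul] using this
  have him : ∀ j k, (w j).im = (w k).im := by
    apply lap_ker_const P hess hcol hirr
    intro k
    have := congrArg Complex.im (hw k)
    simpa [Complex.ofReal_mul] using this
  intro j k
  exact Complex.ext (hre j k) (him j k)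

/-- Gershgorin-type: a purely imaginary eigenvalue of the transpose must be 0. -/
lemma lap_imag_eig {n : ℕ} [NeZero n] (P : Matrix (Fin n) (Fin n) ℝ)
    (hess : EssNonneg P) (hcol : ZeroColSums P) (c : ℝ) (w : Fin n → ℂ)
    (hw0 : w ≠ 0) (hw : ∀ k, ∑ j, (P j k : ℂ) * w j = Complex.I * c * w k) :
    c = 0 := by
  obtain ⟨k, -, hk⟩ := Finset.exists_max_image Finset.univ (fun j => ‖w j‖)
    ⟨0, Finset.mem_univ 0⟩
  have hkpos : 0 < ‖w k‖ := by
    by_contra h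
    push_neg at h
    apply hw0
    funext j
    have h1 := hk j (Finset.mem_univ j)
    have h2 : ‖w j‖ = 0 := le_antisymm (le_trans h1 h) (norm_nonneg _)
    exact norm_eq_zero.1 h2
  have hPkk : P k k ≤ 0 := by
    have h3 := hcol k
    have : P k k = -∑ j ∈ Finset.univ.erase k, P j k := by
      rw [← Finset.add_sum_erase _ _ (Finset.mem_univ k)] at h3; linarith
    rw [this]
    simp only [neg_nonpos]
    exact Finset.sum_nonneg fun j hj => hess j k (Finset.ne_of_mem_erase hj)
  have key : (Complex.I * c - (P k k : ℂ)) * w k = ∑ j ∈ Finset.univ.erase k, (P j k : ℂ) * w j := by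
    have := hw k
    rw [← Finset.add_sum_erase _ _ (Finset.mem_univ k)] at this
    rw [sub_mul]
    linear_combination -this
  have habs : ‖Complex.I * c - (P k k : ℂ)‖ * ‖w k‖
      ≤ (-(P k k)) * ‖w k‖ := by
    rw [← norm_mul, key]
    calc ‖∑ j ∈ Finset.univ.erase k, (P j k : ℂ) * w j‖
        ≤ ∑ j ∈ Finset.univ.erase k, ‖(P j k : ℂ) * w j‖ :=
          norm_sum_le _ _
      _ ≤ ∑ j ∈ Finset.univ.erase k, P j k * ‖w k‖ := by
          apply Finset.sum_le_sum
          intro j hj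
          rw [norm_mul, Complex.norm_real, Real.norm_eq_abs,
            abs_of_nonneg (hess j k (Finset.ne_of_mem_erase hj))]
          exact mul_le_mul_of_nonneg_left (hk j (Finset.mem_univ j))
            (hess j k (Finset.ne_of_mem_erase hj))
      _ = (-(P k k)) * ‖w k‖ := by
          rw [← Finset.sum_mul]
          congr 1
          have h3 := hcol k
          rw [← Finset.add_sum_erase _ _ (Finset.mem_univ k)] at h3
          linarith
  have h5 : ‖Complex.I * c - (P k k : ℂ)‖ ≤ -(P k k) :=
    le_of_mul_le_mul_right (by simpa using habs) hkpos
  have h6 : Complex.normSq (Complex.I * c - (P k k : ℂ)) = c ^ 2 + (P k k) ^ 2 := by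
    simp [Complex.normSq_apply, Complex.mul_im, Complex.mul_re]
    ring
  have h7 : ‖Complex.I * c - (P k k : ℂ)‖ ^ 2 = c ^ 2 + (P k k) ^ 2 := by
    rw [Complex.sq_norm, h6]
  nlinarith [norm_nonneg (Complex.I * c - (P k k : ℂ))]


lemma ker_transpose_one_dim {m : Type*} [Fintype m] [DecidableEq m]
    (C : Matrix m m ℂ) (v : m → ℂ) (hv : v ≠ 0)
    (hker : LinearMap.ker C.mulVecLin = Submodule.span ℂ {v}) :
    ∃ u : m → ℂ, u ≠ 0 ∧ C.transpose.mulVec u = 0 ∧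
      ∀ u' : m → ℂ, C.transpose.mulVec u' = 0 → ∃ κ : ℂ, u' = κ • u := by
  have hrank : C.transpose.rank = C.rank := Matrix.rank_transpose C
  have h1 : C.rank + Module.finrank ℂ (LinearMap.ker C.mulVecLin) = Fintype.card m := by
    rw [Matrix.rank, LinearMap.finrank_range_add_finrank_ker _,
      Module.finrank_fintype_fun_eq_card]
  have h2 : C.transpose.rank
      + Module.finrank ℂ (LinearMap.ker C.transpose.mulVecLin) = Fintype.card m := by
    rw [Matrix.rank, LinearMap.finrank_range_add_finrank_ker _,
      Module.finrank_fintype_fun_eq_card]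
  have h3 : Module.finrank ℂ (LinearMap.ker C.mulVecLin) = 1 := by
    rw [hker]
    exact finrank_span_singleton hv
  have h4 : Module.finrank ℂ (LinearMap.ker C.transpose.mulVecLin) = 1 := by omega
  have h5 : Nontrivial (LinearMap.ker C.transpose.mulVecLin) := by
    apply Module.nontrivial_of_finrank_pos (R := ℂ)
    omega
  obtain ⟨⟨u, hu⟩, hune⟩ := exists_ne (0 : LinearMap.ker C.transpose.mulVecLin)
  have hu0 : u ≠ 0 := by
    intro h
    apply hune
    ext
    simp [h]
  have hle : Submodule.span ℂ {u} ≤ LinearMap.ker C.transpose.mulVecLin := by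
    rw [Submodule.span_singleton_le_iff_mem]
    exact hu
  have heq : Submodule.span ℂ {u} = LinearMap.ker C.transpose.mulVecLin := by
    apply Submodule.eq_of_le_of_finrank_le hle
    rw [h4, finrank_span_singleton hu0]
  refine ⟨u, hu0, hu, fun u' hu' => ?_⟩
  have : u' ∈ Submodule.span ℂ ({u} : Set (m → ℂ)) := by
    rw [heq]
    exact hu'
  obtain ⟨κ, hκ⟩ := Submodule.mem_span_singleton.1 this
  exact ⟨κ, hκ.symm⟩


section
variable {n : ℕ} (P Q : Matrix (Fin n) (Fin n) ℝ) (b : Fin n → ℝ)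
    (θ lam β : ℝ) (x y : Fin n → ℝ) (u : Fin n ⊕ Fin n → ℂ) (j : Fin n)

lemma Amat_mulVec_inl :
    (Amat P Q b θ lam β x y).mulVec u (Sum.inl j)
      = (∑ k, (P j k : ℂ) * u (Sum.inl k))
        + lam * (((2 * x j * y j - β * b j - 1 : ℝ) : ℂ) * u (Sum.inl j)
          + (((x j) ^ 2 : ℝ) : ℂ) * u (Sum.inr j)) := by
  simp only [Amat, Matrix.mulVec, dotProduct, Fintype.sum_sum_type,
    Matrix.add_apply, Matrix.smul_apply, Matrix.fromBlocks_apply₁₁,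
    Matrix.fromBlocks_apply₁₂, Matrix.map_apply, Matrix.zero_apply,
    Matrix.diagonal_apply, Matrix.neg_apply, smul_eq_mul, add_mul, mul_ite, ite_mul,
    mul_zero, zero_mul, zero_add, add_zero, neg_mul, mul_neg, neg_zero,
    Finset.sum_add_distrib, Finset.sum_ite_eq, Finset.sum_ite_eq', Finset.mem_univ,
    if_true, Finset.mul_sum, Finset.sum_const_zero, mul_assoc, Finset.sum_neg_distrib]
  ring

lemma Amat_mulVec_inr :
    (Amat P Q b θ lam β x y).mulVec u (Sum.inr j)
      = θ * (∑ k, (Q j k : ℂ) * u (Sum.inr k))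
        + lam * (((β * b j - 2 * x j * y j : ℝ) : ℂ) * u (Sum.inl j)
          - (((x j) ^ 2 : ℝ) : ℂ) * u (Sum.inr j)) := by
  simp only [Amat, Matrix.mulVec, dotProduct, Fintype.sum_sum_type,
    Matrix.add_apply, Matrix.smul_apply, Matrix.fromBlocks_apply₂₁,
    Matrix.fromBlocks_apply₂₂, Matrix.map_apply, Matrix.zero_apply,
    Matrix.diagonal_apply, Matrix.neg_apply, smul_eq_mul, add_mul, mul_ite, ite_mul,
    mul_zero, zero_mul, zero_add, add_zero, neg_mul, mul_neg, neg_zero,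
    Finset.sum_add_distrib, Finset.sum_ite_eq, Finset.sum_ite_eq', Finset.mem_univ,
    if_true, Finset.mul_sum, Finset.sum_const_zero, mul_assoc, Finset.sum_neg_distrib]
  ring

lemma Amat_transpose_mulVec_inl :
    (Amat P Q b θ lam β x y).transpose.mulVec u (Sum.inl j)
      = (∑ k, (P k j : ℂ) * u (Sum.inl k))
        + lam * (((2 * x j * y j - β * b j - 1 : ℝ) : ℂ) * u (Sum.inl j)
          + ((β * b j - 2 * x j * y j : ℝ) : ℂ) * u (Sum.inr j)) := by
  simp only [Amat, Matrix.mulVec, dotProduct, Fintype.sum_sum_type,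
    Matrix.transpose_apply,
    Matrix.add_apply, Matrix.smul_apply, Matrix.fromBlocks_apply₁₁,
    Matrix.fromBlocks_apply₂₁, Matrix.map_apply, Matrix.zero_apply,
    Matrix.diagonal_apply, Matrix.neg_apply, smul_eq_mul, add_mul, mul_ite, ite_mul,
    mul_zero, zero_mul, zero_add, add_zero, neg_mul, mul_neg, neg_zero,
    Finset.sum_add_distrib, Finset.sum_ite_eq, Finset.sum_ite_eq', Finset.mem_univ,
    if_true, Finset.mul_sum, Finset.sum_const_zero, mul_assoc, Finset.sum_neg_distrib]
  ring

lemma Amat_transpose_mulVec_inr :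
    (Amat P Q b θ lam β x y).transpose.mulVec u (Sum.inr j)
      = θ * (∑ k, (Q k j : ℂ) * u (Sum.inr k))
        + lam * ((((x j) ^ 2 : ℝ) : ℂ) * u (Sum.inl j)
          - (((x j) ^ 2 : ℝ) : ℂ) * u (Sum.inr j)) := by
  simp only [Amat, Matrix.mulVec, dotProduct, Fintype.sum_sum_type,
    Matrix.transpose_apply,
    Matrix.add_apply, Matrix.smul_apply, Matrix.fromBlocks_apply₁₂,
    Matrix.fromBlocks_apply₂₂, Matrix.map_apply, Matrix.zero_apply,
    Matrix.diagonal_apply, Matrix.neg_apply, smul_eq_mul, add_mul, mul_ite, ite_mul,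
    mul_zero, zero_mul, zero_add, add_zero, neg_mul, mul_neg, neg_zero,
    Finset.sum_add_distrib, Finset.sum_ite_eq, Finset.sum_ite_eq', Finset.mem_univ,
    if_true, Finset.mul_sum, Finset.sum_const_zero, mul_assoc, Finset.sum_neg_distrib]
  ring

lemma Amat_conj (i i' : Fin n ⊕ Fin n) :
    (starRingEnd ℂ) (Amat P Q b θ lam β x y i i') = Amat P Q b θ lam β x y i i' := by
  rcases i with j | j <;> rcases i' with k | k <;>
    · simp only [Amat, Matrix.add_apply, Matrix.smul_apply, Matrix.fromBlocks_apply₁₁,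
        Matrix.fromBlocks_apply₁₂, Matrix.fromBlocks_apply₂₁, Matrix.fromBlocks_apply₂₂,
        Matrix.map_apply, Matrix.zero_apply, Matrix.diagonal_apply, Matrix.neg_apply,
        smul_eq_mul, map_add, map_mul, Complex.conj_ofReal, map_neg, map_zero, apply_ite,
        zero_add, add_zero]
      split <;> simp
end


lemma transpose_eig {m : Type*} [Fintype m] [DecidableEq m] (A : Matrix m m ℂ)
    (hreal : ∀ i j, (starRingEnd ℂ) (A i j) = A i j) (μ : ℂ)
    (hμ : (starRingEnd ℂ) μ = -μ) (v : m → ℂ) (hv0 : v ≠ 0)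
    (hAv : A.mulVec v = μ • v) (hspan : ∀ u, A.mulVec u = μ • u → ∃ κ : ℂ, u = κ • v) :
    ∃ u : m → ℂ, u ≠ 0 ∧ A.transpose.mulVec u = (-μ) • u ∧
      ∀ u' : m → ℂ, A.transpose.mulVec u' = (-μ) • u' → ∃ κ : ℂ, u' = κ • u := by
  have hconj : ∀ w : m → ℂ, A.mulVec (fun i => (starRingEnd ℂ) (w i))
      = fun i => (starRingEnd ℂ) (A.mulVec w i) := by
    intro w
    funext i
    simp only [Matrix.mulVec, dotProduct, map_sum, map_mul, hreal]
  set vbar : m → ℂ := fun i => (starRingEnd ℂ) (v i) with hvbar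
  have hvbar0 : vbar ≠ 0 := by
    intro h
    apply hv0
    funext i
    have h2 : (starRingEnd ℂ) (v i) = 0 := congrFun h i
    simpa using congrArg (starRingEnd ℂ) h2
  set C : Matrix m m ℂ := A + μ • (1 : Matrix m m ℂ) with hC
  have hCmul : ∀ u : m → ℂ, C.mulVec u = A.mulVec u + μ • u := by
    intro u
    simp [hC, Matrix.add_mulVec, Matrix.smul_mulVec, Matrix.one_mulVec]
  have hmem : ∀ u : m → ℂ, C.mulVec u = 0 ↔ A.mulVec u = (-μ) • u := by
    intro u
    rw [hCmul]
    constructor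
    · intro h
      rw [neg_smul]
      exact eq_neg_of_add_eq_zero_left h
    · intro h
      rw [h, neg_smul, neg_add_cancel]
  have hAvbar : A.mulVec vbar = (-μ) • vbar := by
    rw [hvbar, hconj v]
    funext i
    rw [hAv]
    simp only [Pi.smul_apply, smul_eq_mul, map_mul, hμ]
  have hker : LinearMap.ker C.mulVecLin = Submodule.span ℂ {vbar} := by
    ext u
    rw [LinearMap.mem_ker, Matrix.mulVecLin_apply, Submodule.mem_span_singleton, hmem]
    constructor
    · intro h
      have h2 : A.mulVec (fun i => (starRingEnd ℂ) (u i))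
          = μ • fun i => (starRingEnd ℂ) (u i) := by
        rw [hconj u]
        funext i
        rw [h]
        simp only [Pi.smul_apply, smul_eq_mul, map_mul, hμ, map_neg]
        ring_nf
      obtain ⟨κ, hκ⟩ := hspan _ h2
      refine ⟨(starRingEnd ℂ) κ, ?_⟩
      funext i
      have h3 := congrFun hκ i
      have h4 := congrArg (starRingEnd ℂ) h3
      simpa [hvbar, map_mul] using h4.symm
    · rintro ⟨κ, rfl⟩
      rw [Matrix.mulVec_smul, hAvbar, smul_comm]
  obtain ⟨u, hu0, huker, huspan⟩ := ker_transpose_one_dim C vbar hvbar0 hker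
  have hCt : ∀ w : m → ℂ, C.transpose.mulVec w = A.transpose.mulVec w + μ • w := by
    intro w
    rw [hC, Matrix.transpose_add, Matrix.transpose_smul, Matrix.transpose_one,
      Matrix.add_mulVec, Matrix.smul_mulVec, Matrix.one_mulVec]
  have hmemT : ∀ w : m → ℂ, C.transpose.mulVec w = 0 ↔ A.transpose.mulVec w = (-μ) • w := by
    intro w
    rw [hCt]
    constructor
    · intro h
      rw [neg_smul]
      exact eq_neg_of_add_eq_zero_left h
    · intro h
      rw [h, neg_smul, neg_add_cancel]
  exact ⟨u, hu0, (hmemT u).1 huker, fun u' h => huspan u' ((hmemT u').2 h)⟩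

lemma normalize_vec {n : ℕ} (hn : 0 < n) (ξ : Fin n → ℝ) (u0 : Fin n ⊕ Fin n → ℂ)
    (h0 : u0 ≠ 0) :
    ∃ κ : ℂ, κ ≠ 0 ∧
      ((∑ j, Complex.normSq (κ * u0 (Sum.inl j)))
        + (∑ j, Complex.normSq (κ * u0 (Sum.inr j))) = 2 * n) ∧
      (∑ j, (ξ j : ℂ) * (κ * u0 (Sum.inl j))).im = 0 ∧
      0 ≤ (∑ j, (ξ j : ℂ) * (κ * u0 (Sum.inl j))).re := by
  set N2 : ℝ := (∑ j, Complex.normSq (u0 (Sum.inl j)))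
    + (∑ j, Complex.normSq (u0 (Sum.inr j))) with hN2
  have hN2pos : 0 < N2 := by
    have h1 : 0 ≤ ∑ j, Complex.normSq (u0 (Sum.inl j)) :=
      Finset.sum_nonneg fun j _ => Complex.normSq_nonneg _
    have h2 : 0 ≤ ∑ j, Complex.normSq (u0 (Sum.inr j)) :=
      Finset.sum_nonneg fun j _ => Complex.normSq_nonneg _
    obtain ⟨i, hi⟩ := Function.ne_iff.1 h0
    have hi0 : u0 i ≠ 0 := by simpa using hi
    have hi' : 0 < Complex.normSq (u0 i) := Complex.normSq_pos.2 hi0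
    rcases i with j | j
    · have h3 : Complex.normSq (u0 (Sum.inl j))
          ≤ ∑ j', Complex.normSq (u0 (Sum.inl j')) :=
        Finset.single_le_sum (f := fun j' => Complex.normSq (u0 (Sum.inl j')))
          (fun j' _ => Complex.normSq_nonneg _) (Finset.mem_univ j)
      rw [hN2]; nlinarith
    · have h3 : Complex.normSq (u0 (Sum.inr j))
          ≤ ∑ j', Complex.normSq (u0 (Sum.inr j')) :=
        Finset.single_le_sum (f := fun j' => Complex.normSq (u0 (Sum.inr j')))
          (fun j' _ => Complex.normSq_nonneg _) (Finset.mem_univ j)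
      rw [hN2]; nlinarith
  set c : ℂ := ∑ j, (ξ j : ℂ) * u0 (Sum.inl j) with hc
  set t : ℝ := Real.sqrt (2 * n / N2) with ht
  have htpos : 0 < t := Real.sqrt_pos.2 (by positivity)
  have ht2 : t ^ 2 = 2 * n / N2 := Real.sq_sqrt (by positivity)
  set κ : ℂ := if c = 0 then (t : ℂ) else (t : ℂ) * ((starRingEnd ℂ) c / ‖c‖)
    with hκ
  have hκc : ∑ j, (ξ j : ℂ) * (κ * u0 (Sum.inl j)) = κ * c := by
    rw [hc, Finset.mul_sum]
    apply Finset.sum_congr rfl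
    intro j _
    ring
  have hκns : Complex.normSq κ = t ^ 2 := by
    rw [hκ]
    split_ifs with hc0
    · rw [Complex.normSq_ofReal]; ring
    · have habs : ‖c‖ ≠ 0 := by simpa [map_eq_zero] using hc0
      have hns : Complex.normSq c = ‖c‖ * ‖c‖ := by
        rw [Complex.normSq_eq_norm_sq]; ring
      rw [Complex.normSq_mul, Complex.normSq_div, Complex.normSq_conj,
        Complex.normSq_ofReal, Complex.normSq_ofReal, hns,
        div_self (mul_ne_zero habs habs)]
      ring
  have hκ0 : κ ≠ 0 := by
    intro h
    rw [h] at hκns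
    simp only [map_zero] at hκns
    nlinarith
  have hκcval : κ * c = ((t * (Complex.normSq c / ‖c‖) : ℝ) : ℂ) := by
    rw [hκ]
    split_ifs with hc0
    · rw [hc0]
      simp [hc0]
    · have key : (starRingEnd ℂ) c * c = ((Complex.normSq c : ℝ) : ℂ) := by
        rw [mul_comm, Complex.mul_conj]
      push_cast
      linear_combination ((t : ℂ) / ((‖c‖ : ℝ) : ℂ)) * key
  refine ⟨κ, hκ0, ?_, ?_, ?_⟩
  · simp only [Complex.normSq_mul]
    rw [← Finset.mul_sum, ← Finset.mul_sum, ← mul_add, ← hN2, hκns, ht2]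
    field_simp
  · rw [hκc, hκcval, Complex.ofReal_im]
  · rw [hκc, hκcval, Complex.ofReal_re]
    exact mul_nonneg (le_of_lt htpos)
      (div_nonneg (Complex.normSq_nonneg c) (norm_nonneg c))


section
variable {n : ℕ} {P Q : Matrix (Fin n) (Fin n) ℝ} {b ξ η : Fin n → ℝ}
    {θ lam β ν : ℝ} {x y : Fin n → ℝ} {u : Fin n ⊕ Fin n → ℂ}

lemma ident_xi (hPξ : P.mulVec ξ = 0) (hlam : lam ≠ 0)
    (hu : (Amat P Q b θ lam β x y).transpose.mulVec u
      = (-(Complex.I * lam * ν)) • u) :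
    ∑ j, (ξ j : ℂ) * (((2 * x j * y j - β * b j - 1 : ℝ) : ℂ) * u (Sum.inl j)
        + ((β * b j - 2 * x j * y j : ℝ) : ℂ) * u (Sum.inr j))
      = (-(Complex.I * ν)) * ∑ j, (ξ j : ℂ) * u (Sum.inl j) := by
  set M : Fin n → ℂ := fun j => ((2 * x j * y j - β * b j - 1 : ℝ) : ℂ) * u (Sum.inl j)
      + ((β * b j - 2 * x j * y j : ℝ) : ℂ) * u (Sum.inr j) with hM
  have h : ∀ j, (∑ k, (P k j : ℂ) * u (Sum.inl k)) + lam * M j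
      = (-(Complex.I * lam * ν)) * u (Sum.inl j) := by
    intro j
    have h0 := congrFun hu (Sum.inl j)
    rw [Amat_transpose_mulVec_inl] at h0
    simpa [hM] using h0
  have hswap : ∑ j, (ξ j : ℂ) * ∑ k, (P k j : ℂ) * u (Sum.inl k) = 0 := by
    calc ∑ j, (ξ j : ℂ) * ∑ k, (P k j : ℂ) * u (Sum.inl k)
        = ∑ j, ∑ k, (ξ j : ℂ) * ((P k j : ℂ) * u (Sum.inl k)) := by
          simp [Finset.mul_sum]
      _ = ∑ k, ∑ j, (ξ j : ℂ) * ((P k j : ℂ) * u (Sum.inl k)) := Finset.sum_comm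
      _ = ∑ k, ((P.mulVec ξ k : ℝ) : ℂ) * u (Sum.inl k) := by
          apply Finset.sum_congr rfl
          intro k _
          rw [Matrix.mulVec, dotProduct]
          push_cast
          rw [Finset.sum_mul]
          apply Finset.sum_congr rfl
          intro j _
          ring
      _ = 0 := by
          rw [hPξ]
          simp
  have hsum := congrArg (fun f => ∑ j, (ξ j : ℂ) * f j) (funext fun j => h j)
  simp only at hsum
  have e1 : ∑ j, (ξ j : ℂ) * ((∑ k, (P k j : ℂ) * u (Sum.inl k)) + lam * M j)
      = (∑ j, (ξ j : ℂ) * ∑ k, (P k j : ℂ) * u (Sum.inl k))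
        + lam * ∑ j, (ξ j : ℂ) * M j := by
    rw [Finset.mul_sum, ← Finset.sum_add_distrib]
    apply Finset.sum_congr rfl
    intro j _
    ring
  have e2 : ∑ j, (ξ j : ℂ) * ((-(Complex.I * lam * ν)) * u (Sum.inl j))
      = (lam : ℂ) * ((-(Complex.I * ν)) * ∑ j, (ξ j : ℂ) * u (Sum.inl j)) := by
    rw [Finset.mul_sum, Finset.mul_sum]
    apply Finset.sum_congr rfl
    intro j _
    ring
  rw [e1, hswap, zero_add, e2] at hsum
  exact mul_left_cancel₀ (Complex.ofReal_ne_zero.2 hlam) hsum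

lemma ident_eta (hQη : Q.mulVec η = 0) (hlam : lam ≠ 0) (hθ : θ ≠ 0)
    (hu : (Amat P Q b θ lam β x y).transpose.mulVec u
      = (-(Complex.I * lam * ν)) • u) :
    ∑ j, (η j : ℂ) * ((((x j) ^ 2 : ℝ) : ℂ) * u (Sum.inl j)
        - (((x j) ^ 2 : ℝ) : ℂ) * u (Sum.inr j))
      = (-(Complex.I * ν)) * ∑ j, (η j : ℂ) * u (Sum.inr j) := by
  set M : Fin n → ℂ := fun j => (((x j) ^ 2 : ℝ) : ℂ) * u (Sum.inl j)
      - (((x j) ^ 2 : ℝ) : ℂ) * u (Sum.inr j) with hM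
  have h : ∀ j, θ * (∑ k, (Q k j : ℂ) * u (Sum.inr k)) + lam * M j
      = (-(Complex.I * lam * ν)) * u (Sum.inr j) := by
    intro j
    have h0 := congrFun hu (Sum.inr j)
    rw [Amat_transpose_mulVec_inr] at h0
    simpa [hM] using h0
  have hswap : ∑ j, (η j : ℂ) * ((θ : ℂ) * ∑ k, (Q k j : ℂ) * u (Sum.inr k)) = 0 := by
    calc ∑ j, (η j : ℂ) * ((θ : ℂ) * ∑ k, (Q k j : ℂ) * u (Sum.inr k))
        = ∑ j, ∑ k, (η j : ℂ) * ((θ : ℂ) * ((Q k j : ℂ) * u (Sum.inr k))) := by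
          simp [Finset.mul_sum]
      _ = ∑ k, ∑ j, (η j : ℂ) * ((θ : ℂ) * ((Q k j : ℂ) * u (Sum.inr k))) :=
          Finset.sum_comm
      _ = ∑ k, (θ : ℂ) * (((Q.mulVec η k : ℝ) : ℂ) * u (Sum.inr k)) := by
          apply Finset.sum_congr rfl
          intro k _
          rw [Matrix.mulVec, dotProduct]
          push_cast
          rw [Finset.sum_mul, Finset.mul_sum]
          apply Finset.sum_congr rfl
          intro j _
          ring
      _ = 0 := by
          rw [hQη]
          simp
  have hsum := congrArg (fun f => ∑ j, (η j : ℂ) * f j) (funext fun j => h j)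
  simp only at hsum
  have e1 : ∑ j, (η j : ℂ) * ((θ : ℂ) * (∑ k, (Q k j : ℂ) * u (Sum.inr k)) + lam * M j)
      = (∑ j, (η j : ℂ) * ((θ : ℂ) * ∑ k, (Q k j : ℂ) * u (Sum.inr k)))
        + lam * ∑ j, (η j : ℂ) * M j := by
    rw [Finset.mul_sum, ← Finset.sum_add_distrib]
    apply Finset.sum_congr rfl
    intro j _
    ring
  have e2 : ∑ j, (η j : ℂ) * ((-(Complex.I * lam * ν)) * u (Sum.inr j))
      = (lam : ℂ) * ((-(Complex.I * ν)) * ∑ j, (η j : ℂ) * u (Sum.inr j)) := by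
    rw [Finset.mul_sum, Finset.mul_sum]
    apply Finset.sum_congr rfl
    intro j _
    ring
  rw [e1, hswap, zero_add, e2] at hsum
  exact mul_left_cancel₀ (Complex.ofReal_ne_zero.2 hlam) hsum
end


set_option maxHeartbeats 1000000 in
/-- For `λ ∈ (0, λ₂]`, `-iλν_λ` is an eigenvalue of `A_{β_λ}(λ)ᵀ` with
one-dimensional eigenspace spanned by `(φ̃_λ, ψ̃_λ)` of the stated normalized
form, and as `λ → 0⁺` the data converge to
`(δ̃₀, s̃_{10}, s̃_{20}, 0, 0)`. -/
theorem stmt_8 (n : ℕ) (hn : 2 ≤ n)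
    (P Q : Matrix (Fin n) (Fin n) ℝ) (a b ξ η : Fin n → ℝ) (θ : ℝ)
    (ha : ∀ j, 0 < a j) (hb : ∀ j, 0 < b j) (hθ : 0 < θ)
    (hPirr : MatIrred P) (hQirr : MatIrred Q)
    (hPess : EssNonneg P) (hQess : EssNonneg Q)
    (hPcol : ZeroColSums P) (hQcol : ZeroColSums Q)
    (hξpos : PosVec ξ) (hηpos : PosVec η)
    (hPξ : P.mulVec ξ = 0) (hQη : Q.mulVec η = 0)
    (hξsum : ∑ j, ξ j = 1) (hηsum : ∑ j, η j = 1)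
    (ε : ℝ) (hε : ε ∈ Set.Ioo (0 : ℝ) 1)
    -- the globally defined equilibrium family on `[0, δε] × B`
    (δε : ℝ) (hδε : 0 < δε)
    (xy : ℝ → ℝ → (Fin n → ℝ) × (Fin n → ℝ))
    (hxyC1 : ContDiffOn ℝ 1 (fun p : ℝ × ℝ => xy p.1 p.2)
      (Set.Icc 0 δε ×ˢ Set.Icc ε (1 / ε)))
    (hxy : ∀ lam ∈ Set.Ioc 0 δε, ∀ β ∈ Set.Icc ε (1 / ε),
      PosVec (xy lam β).1 ∧ PosVec (xy lam β).2 ∧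
      IsEquilib P Q a b θ lam β (xy lam β).1 (xy lam β).2 ∧
      (∀ x y : Fin n → ℝ, PosVec x → PosVec y →
        IsEquilib P Q a b θ lam β x y → (x, y) = xy lam β))
    (hxy0 : ∀ β ∈ Set.Icc ε (1 / ε),
      xy 0 β = ((fun j => (∑ i, a i) * ξ j),
        (fun j => β * (∑ i, b i * ξ i) /
          ((∑ i, a i) * (∑ i, (ξ i) ^ 2 * η i)) * η j)))
    -- the family from the Hopf-eigenvalue theorem on `[0, λ₂]`
    (lam₂ : ℝ) (hlam₂ : lam₂ ∈ Set.Ioo 0 δε)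
    (δf s1f s2f νf βf : ℝ → ℝ) (wf zf : ℝ → Fin n → ℂ)
    (hpos : ∀ lam ∈ Set.Icc 0 lam₂,
      0 < δf lam ∧ 0 < νf lam ∧ βf lam ∈ Set.Icc ε (1 / ε))
    (heig : ∀ lam ∈ Set.Ioc 0 lam₂,
      Sum.elim (fun j => ((δf lam * ξ j : ℝ) : ℂ) + wf lam j)
          (fun j => ((s1f lam : ℂ) + (s2f lam : ℂ) * Complex.I) * ((η j : ℝ) : ℂ)
            + zf lam j) ≠ 0 ∧
      (Amat P Q b θ lam (βf lam) (xy lam (βf lam)).1 (xy lam (βf lam)).2).mulVec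
          (Sum.elim (fun j => ((δf lam * ξ j : ℝ) : ℂ) + wf lam j)
            (fun j => ((s1f lam : ℂ) + (s2f lam : ℂ) * Complex.I) * ((η j : ℝ) : ℂ)
              + zf lam j))
        = (Complex.I * (lam : ℂ) * (νf lam : ℂ)) •
            Sum.elim (fun j => ((δf lam * ξ j : ℝ) : ℂ) + wf lam j)
              (fun j => ((s1f lam : ℂ) + (s2f lam : ℂ) * Complex.I) * ((η j : ℝ) : ℂ)
                + zf lam j) ∧
      (∀ u : Fin n ⊕ Fin n → ℂ,
        (Amat P Q b θ lam (βf lam) (xy lam (βf lam)).1 (xy lam (βf lam)).2).mulVec u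
            = (Complex.I * (lam : ℂ) * (νf lam : ℂ)) • u →
        ∃ κ : ℂ, u = κ • Sum.elim (fun j => ((δf lam * ξ j : ℝ) : ℂ) + wf lam j)
          (fun j => ((s1f lam : ℂ) + (s2f lam : ℂ) * Complex.I) * ((η j : ℝ) : ℂ)
            + zf lam j)))
    -- the limiting frequency `ν₀`
    (ν₀ : ℝ) (hν₀ : ν₀ = (∑ j, a j) * Real.sqrt (∑ j, (ξ j) ^ 2 * η j)) :
    ∃ (δt s1t s2t : ℝ → ℝ) (wt zt : ℝ → Fin n → ℂ),
      (∀ lam ∈ Set.Ioc 0 lam₂,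
        0 ≤ δt lam ∧
        (∑ j, (ξ j : ℂ) * wt lam j = 0) ∧ (∑ j, (η j : ℂ) * zt lam j = 0) ∧
        (∑ j, Complex.normSq (((δt lam : ℝ) : ℂ) + wt lam j))
          + (∑ j, Complex.normSq (((s1t lam : ℂ) + (s2t lam : ℂ) * Complex.I)
              + zt lam j)) = 2 * n ∧
        Sum.elim (fun j => ((δt lam : ℝ) : ℂ) + wt lam j)
          (fun j => ((s1t lam : ℂ) + (s2t lam : ℂ) * Complex.I) + zt lam j) ≠ 0 ∧
        (Amat P Q b θ lam (βf lam) (xy lam (βf lam)).1 (xy lam (βf lam)).2).transpose.mulVec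
            (Sum.elim (fun j => ((δt lam : ℝ) : ℂ) + wt lam j)
              (fun j => ((s1t lam : ℂ) + (s2t lam : ℂ) * Complex.I) + zt lam j))
          = (-(Complex.I * (lam : ℂ) * (νf lam : ℂ))) •
              Sum.elim (fun j => ((δt lam : ℝ) : ℂ) + wt lam j)
                (fun j => ((s1t lam : ℂ) + (s2t lam : ℂ) * Complex.I) + zt lam j) ∧
        (∀ u : Fin n ⊕ Fin n → ℂ,
          (Amat P Q b θ lam (βf lam) (xy lam (βf lam)).1
              (xy lam (βf lam)).2).transpose.mulVec u
            = (-(Complex.I * (lam : ℂ) * (νf lam : ℂ))) • u →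
          ∃ κ : ℂ, u = κ • Sum.elim (fun j => ((δt lam : ℝ) : ℂ) + wt lam j)
            (fun j => ((s1t lam : ℂ) + (s2t lam : ℂ) * Complex.I) + zt lam j))) ∧
      Filter.Tendsto δt (nhdsWithin 0 (Set.Ioi 0))
        (nhds (Real.sqrt ((2 * ν₀ ^ 2 + 2) / (2 * ν₀ ^ 2 + 1)))) ∧
      Filter.Tendsto s1t (nhdsWithin 0 (Set.Ioi 0))
        (nhds (Real.sqrt ((2 * ν₀ ^ 2 + 2) / (2 * ν₀ ^ 2 + 1)) * ν₀ ^ 2 / (ν₀ ^ 2 + 1))) ∧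
      Filter.Tendsto s2t (nhdsWithin 0 (Set.Ioi 0))
        (nhds (Real.sqrt ((2 * ν₀ ^ 2 + 2) / (2 * ν₀ ^ 2 + 1)) * ν₀ / (ν₀ ^ 2 + 1))) ∧
      Filter.Tendsto wt (nhdsWithin 0 (Set.Ioi 0)) (nhds 0) ∧
      Filter.Tendsto zt (nhdsWithin 0 (Set.Ioi 0)) (nhds 0) := by
  
  classical
  have hnpos : 0 < n := by omega
  haveI : NeZero n := ⟨by omega⟩
  have hncast : (0:ℝ) < (n:ℝ) := by exact_mod_cast hnpos
  set c₀ : ℝ := ∑ i, a i with hc₀def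
  set S : ℝ := ∑ i, (ξ i) ^ 2 * η i with hSdef
  set bb : ℝ := ∑ i, b i * ξ i with hbbdef
  have hc₀pos : 0 < c₀ := Finset.sum_pos (fun i _ => ha i) ⟨⟨0, hnpos⟩, Finset.mem_univ _⟩
  have hSpos : 0 < S := Finset.sum_pos
    (fun i _ => by have := hξpos i; have := hηpos i; positivity) ⟨⟨0, hnpos⟩, Finset.mem_univ _⟩
  have hbbpos : 0 < bb := Finset.sum_pos
    (fun i _ => mul_pos (hb i) (hξpos i)) ⟨⟨0, hnpos⟩, Finset.mem_univ _⟩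
  have hν₀pos : 0 < ν₀ := by
    rw [hν₀]
    exact mul_pos hc₀pos (Real.sqrt_pos.2 hSpos)
  have hν₀sq : ν₀ ^ 2 = c₀ ^ 2 * S := by
    rw [hν₀, mul_pow, Real.sq_sqrt hSpos.le]
  set d0 : ℝ := Real.sqrt ((2 * ν₀ ^ 2 + 2) / (2 * ν₀ ^ 2 + 1)) with hd0def
  set s10 : ℝ := d0 * ν₀ ^ 2 / (ν₀ ^ 2 + 1) with hs10def
  set s20 : ℝ := d0 * ν₀ / (ν₀ ^ 2 + 1) with hs20def
  set uinf : Fin n ⊕ Fin n → ℂ :=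
    Sum.elim (fun _ => (d0 : ℂ)) (fun _ => (s10 : ℂ) + (s20 : ℂ) * Complex.I) with huinfdef
  have hξsumC : (∑ j, (ξ j : ℂ)) = 1 := by exact_mod_cast hξsum
  have hηsumC : (∑ j, (η j : ℂ)) = 1 := by exact_mod_cast hηsum
  -- existence of the normalized transpose eigenvector for each lam
  have hexU : ∀ lam, lam ∈ Set.Ioc (0:ℝ) lam₂ → ∃ u : Fin n ⊕ Fin n → ℂ,
      u ≠ 0 ∧
      (Amat P Q b θ lam (βf lam) (xy lam (βf lam)).1 (xy lam (βf lam)).2).transpose.mulVec u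
        = (-(Complex.I * (lam : ℂ) * (νf lam : ℂ))) • u ∧
      (∀ u' : Fin n ⊕ Fin n → ℂ,
        (Amat P Q b θ lam (βf lam) (xy lam (βf lam)).1 (xy lam (βf lam)).2).transpose.mulVec u'
          = (-(Complex.I * (lam : ℂ) * (νf lam : ℂ))) • u' → ∃ κ : ℂ, u' = κ • u) ∧
      ((∑ j, Complex.normSq (u (Sum.inl j)))
        + (∑ j, Complex.normSq (u (Sum.inr j))) = 2 * n) ∧
      (∑ j, (ξ j : ℂ) * u (Sum.inl j)).im = 0 ∧
      0 ≤ (∑ j, (ξ j : ℂ) * u (Sum.inl j)).re := by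
    intro lam hmem
    obtain ⟨hv0, hAv, hspan⟩ := heig lam hmem
    obtain ⟨u1, hu10, hu1eig, hu1span⟩ :=
      transpose_eig (Amat P Q b θ lam (βf lam) (xy lam (βf lam)).1 (xy lam (βf lam)).2)
        (fun i j => Amat_conj P Q b θ lam (βf lam) _ _ i j)
        (Complex.I * (lam : ℂ) * (νf lam : ℂ))
        (by simp [map_mul, Complex.conj_ofReal]; try ring) _ hv0 hAv hspan
    obtain ⟨κ, hκ0, hκnorm, hκim, hκre⟩ := normalize_vec hnpos ξ u1 hu10
    refine ⟨κ • u1, smul_ne_zero hκ0 hu10, ?_, ?_, ?_, ?_, ?_⟩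
    · rw [Matrix.mulVec_smul, hu1eig, smul_comm]
    · intro u' hu'
      obtain ⟨κ', hκ'⟩ := hu1span u' hu'
      exact ⟨κ' * κ⁻¹, by rw [hκ', smul_smul, mul_assoc, inv_mul_cancel₀ hκ0, mul_one]⟩
    · simpa [Pi.smul_apply, smul_eq_mul] using hκnorm
    · simpa [Pi.smul_apply, smul_eq_mul] using hκim
    · simpa [Pi.smul_apply, smul_eq_mul] using hκre
  set uf : ℝ → (Fin n ⊕ Fin n → ℂ) :=
    fun lam => if h : lam ∈ Set.Ioc (0:ℝ) lam₂ then (hexU lam h).choose else uinf with hufdef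
  have hufP : ∀ lam, ∀ h : lam ∈ Set.Ioc (0:ℝ) lam₂,
      uf lam ≠ 0 ∧
      (Amat P Q b θ lam (βf lam) (xy lam (βf lam)).1 (xy lam (βf lam)).2).transpose.mulVec
          (uf lam) = (-(Complex.I * (lam : ℂ) * (νf lam : ℂ))) • uf lam ∧
      (∀ u' : Fin n ⊕ Fin n → ℂ,
        (Amat P Q b θ lam (βf lam) (xy lam (βf lam)).1 (xy lam (βf lam)).2).transpose.mulVec u'
          = (-(Complex.I * (lam : ℂ) * (νf lam : ℂ))) • u' → ∃ κ : ℂ, u' = κ • uf lam) ∧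
      ((∑ j, Complex.normSq (uf lam (Sum.inl j)))
        + (∑ j, Complex.normSq (uf lam (Sum.inr j))) = 2 * n) ∧
      (∑ j, (ξ j : ℂ) * uf lam (Sum.inl j)).im = 0 ∧
      0 ≤ (∑ j, (ξ j : ℂ) * uf lam (Sum.inl j)).re := by
    intro lam h
    have : uf lam = (hexU lam h).choose := by rw [hufdef]; simp only [dif_pos h]
    rw [this]
    exact (hexU lam h).choose_spec
  set δt : ℝ → ℝ := fun lam => (∑ j, (ξ j : ℂ) * uf lam (Sum.inl j)).re with hδtdef
  set s1t : ℝ → ℝ := fun lam => (∑ j, (η j : ℂ) * uf lam (Sum.inr j)).re with hs1tdef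
  set s2t : ℝ → ℝ := fun lam => (∑ j, (η j : ℂ) * uf lam (Sum.inr j)).im with hs2tdef
  set wt : ℝ → Fin n → ℂ := fun lam j => uf lam (Sum.inl j) - ((δt lam : ℝ) : ℂ) with hwtdef
  set zt : ℝ → Fin n → ℂ := fun lam j =>
    uf lam (Sum.inr j) - (((s1t lam : ℝ) : ℂ) + ((s2t lam : ℝ) : ℂ) * Complex.I) with hztdef
  have hvec : ∀ lam, Sum.elim (fun j => ((δt lam : ℝ) : ℂ) + wt lam j)
      (fun j => (((s1t lam : ℝ) : ℂ) + ((s2t lam : ℝ) : ℂ) * Complex.I) + zt lam j)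
      = uf lam := by
    intro lam
    funext i
    rcases i with j | j <;> simp only [Sum.elim_inl, Sum.elim_inr, hwtdef, hztdef] <;> ring
  have hIcalc : ∀ (w X : ℂ), Complex.I * ((-(Complex.I * w)) * X) = w * X := by
    intro w X
    have h1 : Complex.I * ((-(Complex.I * w)) * X) = -(Complex.I * Complex.I) * (w * X) := by
      ring
    rw [h1, Complex.I_mul_I]
    ring
  have main : Filter.Tendsto uf (nhdsWithin 0 (Set.Ioi 0)) (nhds uinf) := by
    apply Filter.tendsto_of_subseq_tendsto
    intro ns hns
    have hmemIoc : ∀ᶠ k in Filter.atTop, ns k ∈ Set.Ioc (0:ℝ) lam₂ :=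
      hns.eventually (Filter.eventually_of_mem
        (Ioc_mem_nhdsGT_of_mem ⟨le_refl 0, hlam₂.1⟩) (fun x hx => hx))
    obtain ⟨N, hN⟩ := Filter.eventually_atTop.1 hmemIoc
    set y0f : ℕ → ℝ := fun k => ns (k + N) with hy0fdef
    have hymem : ∀ k, y0f k ∈ Set.Ioc (0:ℝ) lam₂ := fun k => hN _ (Nat.le_add_left N k)
    have hy0 : Filter.Tendsto y0f Filter.atTop (nhds 0) :=
      (hns.mono_right nhdsWithin_le_nhds).comp (Filter.tendsto_add_atTop_nat N)
    obtain ⟨βs, hβsmem, φ₁, hφ₁, hβlim⟩ := isCompact_Icc.tendsto_subseq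
      (x := fun k => βf (y0f k)) (fun k => (hpos (y0f k) ⟨(hymem k).1.le, (hymem k).2⟩).2.2)
    have hball : ∀ k, uf (y0f (φ₁ k)) ∈
        Metric.closedBall (0 : (Fin n ⊕ Fin n) → ℂ) (Real.sqrt (2 * n)) := by
      intro k
      rw [Metric.mem_closedBall, dist_zero_right,
        pi_norm_le_iff_of_nonneg (Real.sqrt_nonneg _)]
      intro i
      have hP4 := (hufP _ (hymem (φ₁ k))).2.2.2.1
      have h1 : 0 ≤ ∑ j, Complex.normSq (uf (y0f (φ₁ k)) (Sum.inl j)) :=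
        Finset.sum_nonneg fun j _ => Complex.normSq_nonneg _
      have h2 : 0 ≤ ∑ j, Complex.normSq (uf (y0f (φ₁ k)) (Sum.inr j)) :=
        Finset.sum_nonneg fun j _ => Complex.normSq_nonneg _
      have hile : Complex.normSq (uf (y0f (φ₁ k)) i) ≤ 2 * n := by
        rcases i with j | j
        · have h3 : Complex.normSq (uf (y0f (φ₁ k)) (Sum.inl j))
              ≤ ∑ j', Complex.normSq (uf (y0f (φ₁ k)) (Sum.inl j')) :=
            Finset.single_le_sum
              (f := fun j' => Complex.normSq (uf (y0f (φ₁ k)) (Sum.inl j')))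
              (fun j' _ => Complex.normSq_nonneg _) (Finset.mem_univ j)
          linarith
        · have h3 : Complex.normSq (uf (y0f (φ₁ k)) (Sum.inr j))
              ≤ ∑ j', Complex.normSq (uf (y0f (φ₁ k)) (Sum.inr j')) :=
            Finset.single_le_sum
              (f := fun j' => Complex.normSq (uf (y0f (φ₁ k)) (Sum.inr j')))
              (fun j' _ => Complex.normSq_nonneg _) (Finset.mem_univ j)
          linarith
      calc ‖uf (y0f (φ₁ k)) i‖ = Real.sqrt (Complex.normSq (uf (y0f (φ₁ k)) i)) := by
            rw [Complex.norm_def]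
        _ ≤ Real.sqrt (2 * n) := Real.sqrt_le_sqrt hile
    obtain ⟨ustar, hustarmem, φ₂, hφ₂, hulim⟩ :=
      (isCompact_closedBall (0 : (Fin n ⊕ Fin n) → ℂ) (Real.sqrt (2 * n))).tendsto_subseq hball
    refine ⟨fun k => φ₁ (φ₂ k) + N, ?_⟩
    set t : ℕ → ℝ := fun k => y0f (φ₁ (φ₂ k)) with htdef
    have htmem : ∀ k, t k ∈ Set.Ioc (0:ℝ) lam₂ := fun k => hymem _
    have ht0 : Filter.Tendsto t Filter.atTop (nhds 0) :=
      hy0.comp ((hφ₁.comp hφ₂).tendsto_atTop)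
    have hβt : Filter.Tendsto (fun k => βf (t k)) Filter.atTop (nhds βs) :=
      (hβlim.comp hφ₂.tendsto_atTop).congr (fun k => rfl)
    have hu : Filter.Tendsto (fun k => uf (t k)) Filter.atTop (nhds ustar) :=
      hulim.congr (fun k => rfl)
    have hucomp : ∀ i, Filter.Tendsto (fun k => uf (t k) i) Filter.atTop (nhds (ustar i)) :=
      fun i => ((continuous_apply i).tendsto _).comp hu
    suffices hfin : ustar = uinf by
      rw [← hfin]
      exact hu
    have hβmemI : βs ∈ Set.Icc ε (1/ε) := hβsmem
    have hxy0' := hxy0 βs hβmemI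
    set r0 : ℝ := βs * bb / (c₀ * S) with hr0def
    have hseqD : Filter.Tendsto (fun k => (t k, βf (t k))) Filter.atTop
        (nhdsWithin (0, βs) (Set.Icc (0:ℝ) δε ×ˢ Set.Icc ε (1/ε))) := by
      rw [tendsto_nhdsWithin_iff]
      constructor
      · exact ht0.prodMk_nhds hβt
      · exact Filter.Eventually.of_forall fun k =>
          ⟨⟨(htmem k).1.le, le_trans (htmem k).2 hlam₂.2.le⟩,
            (hpos _ ⟨(htmem k).1.le, (htmem k).2⟩).2.2⟩
    have hxylim : Filter.Tendsto (fun k => xy (t k) (βf (t k))) Filter.atTop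
        (nhds (xy 0 βs)) := by
      have hcw := hxyC1.continuousOn (0, βs) ⟨⟨le_refl 0, hδε.le⟩, hβmemI⟩
      exact (Filter.Tendsto.comp hcw hseqD).congr (fun k => rfl)
    have hxj : ∀ j, Filter.Tendsto (fun k => (xy (t k) (βf (t k))).1 j) Filter.atTop
        (nhds (c₀ * ξ j)) := by
      intro j
      have h1 : Filter.Tendsto (fun k => (xy (t k) (βf (t k))).1 j) Filter.atTop
          (nhds ((xy 0 βs).1 j)) :=
        ((((continuous_apply j).comp continuous_fst).tendsto _).comp hxylim).congr
          (fun k => rfl)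
      rwa [hxy0'] at h1
    have hyj : ∀ j, Filter.Tendsto (fun k => (xy (t k) (βf (t k))).2 j) Filter.atTop
        (nhds (r0 * η j)) := by
      intro j
      have h1 : Filter.Tendsto (fun k => (xy (t k) (βf (t k))).2 j) Filter.atTop
          (nhds ((xy 0 βs).2 j)) :=
        ((((continuous_apply j).comp continuous_snd).tendsto _).comp hxylim).congr
          (fun k => rfl)
      rwa [hxy0'] at h1
    have hM1R : ∀ j, Filter.Tendsto (fun k => 2 * (xy (t k) (βf (t k))).1 j
        * (xy (t k) (βf (t k))).2 j - βf (t k) * b j - 1) Filter.atTop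
        (nhds (2 * (c₀ * ξ j) * (r0 * η j) - βs * b j - 1)) :=
      fun j => (((tendsto_const_nhds.mul (hxj j)).mul (hyj j)).sub
        (hβt.mul tendsto_const_nhds)).sub tendsto_const_nhds
    have hM3R : ∀ j, Filter.Tendsto (fun k => βf (t k) * b j - 2 * (xy (t k) (βf (t k))).1 j
        * (xy (t k) (βf (t k))).2 j) Filter.atTop
        (nhds (βs * b j - 2 * (c₀ * ξ j) * (r0 * η j))) :=
      fun j => (hβt.mul tendsto_const_nhds).sub
        ((tendsto_const_nhds.mul (hxj j)).mul (hyj j))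
    have hM2R : ∀ j, Filter.Tendsto (fun k => ((xy (t k) (βf (t k))).1 j) ^ 2) Filter.atTop
        (nhds ((c₀ * ξ j) ^ 2)) := fun j => (hxj j).pow 2
    have hC : ∀ (g : ℕ → ℝ) (L : ℝ), Filter.Tendsto g Filter.atTop (nhds L) →
        Filter.Tendsto (fun k => ((g k : ℝ) : ℂ)) Filter.atTop (nhds ((L : ℝ) : ℂ)) :=
      fun g L hg => (Complex.continuous_ofReal.tendsto _).comp hg
    have htC : Filter.Tendsto (fun k => ((t k : ℝ) : ℂ)) Filter.atTop (nhds 0) := by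
      simpa using hC _ _ ht0
    have heqμ : ∀ k, (Amat P Q b θ (t k) (βf (t k)) (xy (t k) (βf (t k))).1
        (xy (t k) (βf (t k))).2).transpose.mulVec (uf (t k))
        = (-(Complex.I * (t k : ℂ) * (νf (t k) : ℂ))) • uf (t k) :=
      fun k => (hufP _ (htmem k)).2.1
    have hAulimL : ∀ j, Filter.Tendsto (fun k => (Amat P Q b θ (t k) (βf (t k))
        (xy (t k) (βf (t k))).1 (xy (t k) (βf (t k))).2).transpose.mulVec
        (uf (t k)) (Sum.inl j)) Filter.atTop
        (nhds (∑ k', (P k' j : ℂ) * ustar (Sum.inl k'))) := by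
      intro j
      have h2 : Filter.Tendsto (fun k => (∑ k', (P k' j : ℂ) * uf (t k) (Sum.inl k'))
          + (t k : ℂ) * (((2 * (xy (t k) (βf (t k))).1 j * (xy (t k) (βf (t k))).2 j
            - βf (t k) * b j - 1 : ℝ) : ℂ) * uf (t k) (Sum.inl j)
          + ((βf (t k) * b j - 2 * (xy (t k) (βf (t k))).1 j
            * (xy (t k) (βf (t k))).2 j : ℝ) : ℂ) * uf (t k) (Sum.inr j))) Filter.atTop
          (nhds ((∑ k', (P k' j : ℂ) * ustar (Sum.inl k'))
          + 0 * (((2 * (c₀ * ξ j) * (r0 * η j) - βs * b j - 1 : ℝ) : ℂ) * ustar (Sum.inl j)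
          + ((βs * b j - 2 * (c₀ * ξ j) * (r0 * η j) : ℝ) : ℂ) * ustar (Sum.inr j)))) :=
        (tendsto_finset_sum _ fun k' _ => tendsto_const_nhds.mul (hucomp (Sum.inl k'))).add
          (htC.mul (((hC _ _ (hM1R j)).mul (hucomp (Sum.inl j))).add
            ((hC _ _ (hM3R j)).mul (hucomp (Sum.inr j)))))
      rw [zero_mul, add_zero] at h2
      exact h2.congr (fun k => (Amat_transpose_mulVec_inl P Q b θ (t k) (βf (t k))
        (xy (t k) (βf (t k))).1 (xy (t k) (βf (t k))).2 (uf (t k)) j).symm)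
    have hAulimR : ∀ j, Filter.Tendsto (fun k => (Amat P Q b θ (t k) (βf (t k))
        (xy (t k) (βf (t k))).1 (xy (t k) (βf (t k))).2).transpose.mulVec
        (uf (t k)) (Sum.inr j)) Filter.atTop
        (nhds ((θ : ℂ) * ∑ k', (Q k' j : ℂ) * ustar (Sum.inr k'))) := by
      intro j
      have h2 : Filter.Tendsto (fun k => (θ : ℂ) * (∑ k', (Q k' j : ℂ) * uf (t k) (Sum.inr k'))
          + (t k : ℂ) * (((((xy (t k) (βf (t k))).1 j) ^ 2 : ℝ) : ℂ) * uf (t k) (Sum.inl j)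
            - ((((xy (t k) (βf (t k))).1 j) ^ 2 : ℝ) : ℂ) * uf (t k) (Sum.inr j)))
          Filter.atTop
          (nhds ((θ : ℂ) * (∑ k', (Q k' j : ℂ) * ustar (Sum.inr k'))
          + 0 * ((((c₀ * ξ j) ^ 2 : ℝ) : ℂ) * ustar (Sum.inl j)
            - (((c₀ * ξ j) ^ 2 : ℝ) : ℂ) * ustar (Sum.inr j)))) :=
        (tendsto_const_nhds.mul (tendsto_finset_sum _ fun k' _ =>
          tendsto_const_nhds.mul (hucomp (Sum.inr k')))).add
          (htC.mul (((hC _ _ (hM2R j)).mul (hucomp (Sum.inl j))).sub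
            ((hC _ _ (hM2R j)).mul (hucomp (Sum.inr j)))))
      rw [zero_mul, add_zero] at h2
      exact h2.congr (fun k => (Amat_transpose_mulVec_inr P Q b θ (t k) (βf (t k))
        (xy (t k) (βf (t k))).1 (xy (t k) (βf (t k))).2 (uf (t k)) j).symm)
    have hustarnorm : (∑ j, Complex.normSq (ustar (Sum.inl j)))
        + (∑ j, Complex.normSq (ustar (Sum.inr j))) = 2 * n := by
      have hGcont : Continuous (fun u : (Fin n ⊕ Fin n) → ℂ =>
          (∑ j, Complex.normSq (u (Sum.inl j))) + ∑ j, Complex.normSq (u (Sum.inr j))) := by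
        apply Continuous.add <;>
          exact continuous_finset_sum _
            (fun j _ => Complex.continuous_normSq.comp (continuous_apply _))
      have h1 := (hGcont.tendsto ustar).comp hu
      exact tendsto_nhds_unique (h1.congr (fun k => (hufP _ (htmem k)).2.2.2.1))
        tendsto_const_nhds
    have hustar0 : ustar ≠ 0 := by
      intro h
      rw [h] at hustarnorm
      simp only [Pi.zero_apply, Complex.normSq_zero, Finset.sum_const_zero,
        add_zero] at hustarnorm
      have : (0:ℝ) < 2 * n := by positivity
      linarith [hustarnorm]
    obtain ⟨i0, hi0⟩ := Function.ne_iff.1 hustar0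
    have hi0' : ustar i0 ≠ 0 := by simpa using hi0
    set μs : ℕ → ℂ := fun k => Complex.I * (t k : ℂ) * (νf (t k) : ℂ) with hμsdef
    set L : Fin n ⊕ Fin n → ℂ :=
      Sum.elim (fun j => ∑ k', (P k' j : ℂ) * ustar (Sum.inl k'))
        (fun j => (θ : ℂ) * ∑ k', (Q k' j : ℂ) * ustar (Sum.inr k')) with hLdef
    have hAulim : ∀ i, Filter.Tendsto (fun k => (Amat P Q b θ (t k) (βf (t k))
        (xy (t k) (βf (t k))).1 (xy (t k) (βf (t k))).2).transpose.mulVec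
        (uf (t k)) i) Filter.atTop (nhds (L i)) := by
      intro i
      rcases i with j | j
      · simpa only [hLdef, Sum.elim_inl] using hAulimL j
      · simpa only [hLdef, Sum.elim_inr] using hAulimR j
    have hformμ : ∀ k, μs k * uf (t k) i0 = -((Amat P Q b θ (t k) (βf (t k))
        (xy (t k) (βf (t k))).1 (xy (t k) (βf (t k))).2).transpose.mulVec
        (uf (t k)) i0) := by
      intro k
      have h1 := congrFun (heqμ k) i0
      rw [h1, Pi.smul_apply, smul_eq_mul]
      simp only [hμsdef]
      ring
    have hμtend : Filter.Tendsto μs Filter.atTop (nhds (-(L i0) / ustar i0)) := by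
      have hdiv : Filter.Tendsto (fun k => -((Amat P Q b θ (t k) (βf (t k))
          (xy (t k) (βf (t k))).1 (xy (t k) (βf (t k))).2).transpose.mulVec
          (uf (t k)) i0) / uf (t k) i0) Filter.atTop (nhds (-(L i0) / ustar i0)) :=
        ((hAulim i0).neg).div (hucomp i0) hi0'
      have hev : ∀ᶠ k in Filter.atTop, uf (t k) i0 ≠ 0 := (hucomp i0).eventually_ne hi0'
      apply Filter.Tendsto.congr' _ hdiv
      filter_upwards [hev] with k hk
      rw [← hformμ k, mul_div_assoc, div_self hk, mul_one]
    set μstar : ℂ := -(L i0) / ustar i0 with hμstardef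
    have hμre : μstar.re = 0 := by
      have h1 : Filter.Tendsto (fun k => (μs k).re) Filter.atTop (nhds μstar.re) :=
        (Complex.continuous_re.tendsto _).comp hμtend
      have h2 : ∀ k, (μs k).re = 0 := by
        intro k
        simp [hμsdef]
      exact tendsto_nhds_unique (h1.congr h2) tendsto_const_nhds
    have heqall : ∀ i, L i = -μstar * ustar i := by
      intro i
      have h1 := hAulim i
      have h2 : Filter.Tendsto (fun k => -(μs k) * uf (t k) i) Filter.atTop
          (nhds (-μstar * ustar i)) := (hμtend.neg).mul (hucomp i)
      have h3 : ∀ k, (Amat P Q b θ (t k) (βf (t k)) (xy (t k) (βf (t k))).1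
          (xy (t k) (βf (t k))).2).transpose.mulVec (uf (t k)) i
          = -(μs k) * uf (t k) i := by
        intro k
        have h4 := congrFun (heqμ k) i
        rw [h4, Pi.smul_apply, smul_eq_mul]
      exact tendsto_nhds_unique (h1.congr h3) h2
    have hμconv : -μstar = Complex.I * ((-μstar.im : ℝ) : ℂ) := by
      apply Complex.ext
      · simp [hμre]
      · simp
    have hφψ : (fun j => ustar (Sum.inl j)) ≠ 0 ∨ (fun j => ustar (Sum.inr j)) ≠ 0 := by
      by_contra hcon
      push_neg at hcon
      apply hustar0
      funext i
      rcases i with j | j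
      · exact congrFun hcon.1 j
      · exact congrFun hcon.2 j
    have hcreal : μstar.im = 0 := by
      rcases hφψ with hφ | hψ
      · have hgeq : ∀ k', ∑ j, (P j k' : ℂ) * ustar (Sum.inl j)
            = Complex.I * ((-μstar.im : ℝ) : ℂ) * ustar (Sum.inl k') := by
          intro k'
          have h1 := heqall (Sum.inl k')
          simp only [hLdef, Sum.elim_inl] at h1
          rw [h1, hμconv]
        have h5 := lap_imag_eig P hPess hPcol (-μstar.im) _ hφ hgeq
        linarith
      · have hθC : (θ : ℂ) ≠ 0 := Complex.ofReal_ne_zero.2 (ne_of_gt hθ)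
        have hgeq : ∀ k', ∑ j, (Q j k' : ℂ) * ustar (Sum.inr j)
            = Complex.I * ((-μstar.im / θ : ℝ) : ℂ) * ustar (Sum.inr k') := by
          intro k'
          have h1 := heqall (Sum.inr k')
          simp only [hLdef, Sum.elim_inr] at h1
          apply mul_left_cancel₀ hθC
          rw [h1, hμconv]
          push_cast
          field_simp
        have h5 := lap_imag_eig Q hQess hQcol (-μstar.im / θ) _ hψ hgeq
        rcases div_eq_zero_iff.1 h5 with h | h
        · linarith [neg_eq_zero.1 h]
        · exact absurd h (by exact_mod_cast ne_of_gt hθ)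
    have hμ0 : μstar = 0 := by
      apply Complex.ext <;> simp [hμre, hcreal]
    have hPzero : ∀ k', ∑ j, (P j k' : ℂ) * ustar (Sum.inl j) = 0 := by
      intro k'
      have h1 := heqall (Sum.inl k')
      simp only [hLdef, Sum.elim_inl] at h1
      rw [h1, hμ0]
      ring
    have hQzero : ∀ k', ∑ j, (Q j k' : ℂ) * ustar (Sum.inr j) = 0 := by
      intro k'
      have h1 := heqall (Sum.inr k')
      simp only [hLdef, Sum.elim_inr] at h1
      have h2 : (θ : ℂ) * (∑ j, (Q j k' : ℂ) * ustar (Sum.inr j)) = 0 := by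
        rw [h1, hμ0]
        ring
      exact (mul_eq_zero.1 h2).resolve_left (Complex.ofReal_ne_zero.2 (ne_of_gt hθ))
    have hφc := lap_ker_constC P hPess hPcol hPirr _ hPzero
    have hψc := lap_ker_constC Q hQess hQcol hQirr _ hQzero
    set j0 : Fin n := ⟨0, hnpos⟩ with hj0def
    set αv : ℂ := ustar (Sum.inl j0) with hαdef
    set γv : ℂ := ustar (Sum.inr j0) with hγdef
    have hφa : ∀ j, ustar (Sum.inl j) = αv := fun j => hφc j j0
    have hψa : ∀ j, ustar (Sum.inr j) = γv := fun j => hψc j j0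
    have hδlim : Filter.Tendsto (fun k => ∑ j, (ξ j : ℂ) * uf (t k) (Sum.inl j))
        Filter.atTop (nhds αv) := by
      have h1 : Filter.Tendsto (fun k => ∑ j, (ξ j : ℂ) * uf (t k) (Sum.inl j))
          Filter.atTop (nhds (∑ j, (ξ j : ℂ) * ustar (Sum.inl j))) :=
        tendsto_finset_sum _ (fun j _ => tendsto_const_nhds.mul (hucomp (Sum.inl j)))
      have h2 : ∑ j, (ξ j : ℂ) * ustar (Sum.inl j) = αv := by
        calc ∑ j, (ξ j : ℂ) * ustar (Sum.inl j) = ∑ j, (ξ j : ℂ) * αv := by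
              apply Finset.sum_congr rfl
              intro j _
              rw [hφa j]
          _ = (∑ j, (ξ j : ℂ)) * αv := by rw [Finset.sum_mul]
          _ = αv := by rw [hξsumC, one_mul]
      rwa [h2] at h1
    have hσlim : Filter.Tendsto (fun k => ∑ j, (η j : ℂ) * uf (t k) (Sum.inr j))
        Filter.atTop (nhds γv) := by
      have h1 : Filter.Tendsto (fun k => ∑ j, (η j : ℂ) * uf (t k) (Sum.inr j))
          Filter.atTop (nhds (∑ j, (η j : ℂ) * ustar (Sum.inr j))) :=
        tendsto_finset_sum _ (fun j _ => tendsto_const_nhds.mul (hucomp (Sum.inr j)))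
      have h2 : ∑ j, (η j : ℂ) * ustar (Sum.inr j) = γv := by
        calc ∑ j, (η j : ℂ) * ustar (Sum.inr j) = ∑ j, (η j : ℂ) * γv := by
              apply Finset.sum_congr rfl
              intro j _
              rw [hψa j]
          _ = (∑ j, (η j : ℂ)) * γv := by rw [Finset.sum_mul]
          _ = γv := by rw [hηsumC, one_mul]
      rwa [h2] at h1
    have hαim : αv.im = 0 :=
      tendsto_nhds_unique (((Complex.continuous_im.tendsto _).comp hδlim).congr
        (fun k => (hufP _ (htmem k)).2.2.2.2.1)) tendsto_const_nhds
    have hαre : 0 ≤ αv.re :=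
      ge_of_tendsto ((Complex.continuous_re.tendsto _).comp hδlim)
        (Filter.Eventually.of_forall fun k => (hufP _ (htmem k)).2.2.2.2.2)
    have hid1 : ∀ k, ∑ j, (ξ j : ℂ) * (((2 * (xy (t k) (βf (t k))).1 j
        * (xy (t k) (βf (t k))).2 j - βf (t k) * b j - 1 : ℝ) : ℂ) * uf (t k) (Sum.inl j)
        + ((βf (t k) * b j - 2 * (xy (t k) (βf (t k))).1 j
        * (xy (t k) (βf (t k))).2 j : ℝ) : ℂ) * uf (t k) (Sum.inr j))
        = (-(Complex.I * ((νf (t k) : ℝ) : ℂ))) * ∑ j, (ξ j : ℂ) * uf (t k) (Sum.inl j) :=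
      fun k => ident_xi hPξ (ne_of_gt (htmem k).1) (heqμ k)
    have hid2 : ∀ k, ∑ j, (η j : ℂ) * (((((xy (t k) (βf (t k))).1 j) ^ 2 : ℝ) : ℂ)
        * uf (t k) (Sum.inl j) - ((((xy (t k) (βf (t k))).1 j) ^ 2 : ℝ) : ℂ)
        * uf (t k) (Sum.inr j))
        = (-(Complex.I * ((νf (t k) : ℝ) : ℂ))) * ∑ j, (η j : ℂ) * uf (t k) (Sum.inr j) :=
      fun k => ident_eta hQη (ne_of_gt (htmem k).1) (ne_of_gt hθ) (heqμ k)
    set pv : ℂ := ∑ j, (ξ j : ℂ) * (((2 * (c₀ * ξ j) * (r0 * η j) - βs * b j - 1 : ℝ) : ℂ)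
      * ustar (Sum.inl j) + ((βs * b j - 2 * (c₀ * ξ j) * (r0 * η j) : ℝ) : ℂ)
      * ustar (Sum.inr j)) with hpvdef
    set qv : ℂ := ∑ j, (η j : ℂ) * ((((c₀ * ξ j) ^ 2 : ℝ) : ℂ) * ustar (Sum.inl j)
      - (((c₀ * ξ j) ^ 2 : ℝ) : ℂ) * ustar (Sum.inr j)) with hqvdef
    have hL1lim : Filter.Tendsto (fun k => ∑ j, (ξ j : ℂ)
        * (((2 * (xy (t k) (βf (t k))).1 j * (xy (t k) (βf (t k))).2 j
          - βf (t k) * b j - 1 : ℝ) : ℂ) * uf (t k) (Sum.inl j)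
        + ((βf (t k) * b j - 2 * (xy (t k) (βf (t k))).1 j
          * (xy (t k) (βf (t k))).2 j : ℝ) : ℂ) * uf (t k) (Sum.inr j)))
        Filter.atTop (nhds pv) :=
      tendsto_finset_sum _ (fun j _ => tendsto_const_nhds.mul
        (((hC _ _ (hM1R j)).mul (hucomp (Sum.inl j))).add
          ((hC _ _ (hM3R j)).mul (hucomp (Sum.inr j)))))
    have hL2lim : Filter.Tendsto (fun k => ∑ j, (η j : ℂ)
        * (((((xy (t k) (βf (t k))).1 j) ^ 2 : ℝ) : ℂ) * uf (t k) (Sum.inl j)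
          - ((((xy (t k) (βf (t k))).1 j) ^ 2 : ℝ) : ℂ) * uf (t k) (Sum.inr j)))
        Filter.atTop (nhds qv) :=
      tendsto_finset_sum _ (fun j _ => tendsto_const_nhds.mul
        (((hC _ _ (hM2R j)).mul (hucomp (Sum.inl j))).sub
          ((hC _ _ (hM2R j)).mul (hucomp (Sum.inr j)))))
    have hc₀r0S : c₀ * r0 * S = βs * bb := by
      rw [hr0def]
      field_simp
    have hqval : qv = ((ν₀ ^ 2 : ℝ) : ℂ) * αv - ((ν₀ ^ 2 : ℝ) : ℂ) * γv := by
      have hM20sum : ∑ j, η j * (c₀ * ξ j) ^ 2 = ν₀ ^ 2 := by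
        rw [hν₀sq, hSdef, Finset.mul_sum]
        apply Finset.sum_congr rfl
        intro j _
        ring
      calc qv = ∑ j, (η j : ℂ) * ((((c₀ * ξ j) ^ 2 : ℝ) : ℂ) * αv
            - (((c₀ * ξ j) ^ 2 : ℝ) : ℂ) * γv) := by
            rw [hqvdef]
            apply Finset.sum_congr rfl
            intro j _
            rw [hφa j, hψa j]
        _ = ((∑ j, η j * (c₀ * ξ j) ^ 2 : ℝ) : ℂ) * αv
            - ((∑ j, η j * (c₀ * ξ j) ^ 2 : ℝ) : ℂ) * γv := by
            push_cast
            rw [Finset.sum_mul, Finset.sum_mul, ← Finset.sum_sub_distrib]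
            apply Finset.sum_congr rfl
            intro j _
            ring
        _ = ((ν₀ ^ 2 : ℝ) : ℂ) * αv - ((ν₀ ^ 2 : ℝ) : ℂ) * γv := by rw [hM20sum]
    rcases eq_or_ne αv 0 with hα0 | hαne
    · exfalso
      have hsl : ∑ j, Complex.normSq (ustar (Sum.inl j)) = 0 := by
        apply Finset.sum_eq_zero
        intro j _
        rw [hφa j, hα0]
        simp
      have hsr : ∑ j, Complex.normSq (ustar (Sum.inr j)) = (n : ℝ) * Complex.normSq γv := by
        calc ∑ j, Complex.normSq (ustar (Sum.inr j)) = ∑ _j : Fin n, Complex.normSq γv := by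
              apply Finset.sum_congr rfl
              intro j _
              rw [hψa j]
          _ = (n : ℝ) * Complex.normSq γv := by
              rw [Finset.sum_const, Finset.card_univ, Fintype.card_fin, nsmul_eq_mul]
      have hγ2 : Complex.normSq γv = 2 := by
        rw [hsl, hsr] at hustarnorm
        have h6 : (n:ℝ) * Complex.normSq γv = (n:ℝ) * 2 := by linarith
        exact mul_left_cancel₀ (ne_of_gt hncast) h6
      have hγ0 : γv ≠ 0 := by
        intro h
        rw [h] at hγ2
        simp at hγ2
      have hσev : ∀ᶠ k in Filter.atTop, (∑ j, (η j : ℂ) * uf (t k) (Sum.inr j)) ≠ 0 :=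
        hσlim.eventually_ne hγ0
      have hνlim : Filter.Tendsto (fun k => ((νf (t k) : ℝ) : ℂ)) Filter.atTop
          (nhds (Complex.I * qv / γv)) := by
        have hdiv : Filter.Tendsto (fun k => Complex.I * (∑ j, (η j : ℂ)
            * (((((xy (t k) (βf (t k))).1 j) ^ 2 : ℝ) : ℂ) * uf (t k) (Sum.inl j)
              - ((((xy (t k) (βf (t k))).1 j) ^ 2 : ℝ) : ℂ) * uf (t k) (Sum.inr j)))
            / (∑ j, (η j : ℂ) * uf (t k) (Sum.inr j))) Filter.atTop
            (nhds (Complex.I * qv / γv)) :=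
          (tendsto_const_nhds.mul hL2lim).div hσlim hγ0
        apply Filter.Tendsto.congr' _ hdiv
        filter_upwards [hσev] with k hk
        rw [hid2 k, hIcalc, mul_div_assoc, div_self hk, mul_one]
      have hIq : Complex.I * qv / γv = -(Complex.I) * ((ν₀ ^ 2 : ℝ) : ℂ) := by
        rw [hqval, hα0]
        field_simp
        ring
      have him0 : (Complex.I * qv / γv).im = 0 :=
        tendsto_nhds_unique (((Complex.continuous_im.tendsto _).comp hνlim).congr
          (fun k => Complex.ofReal_im _)) tendsto_const_nhds
      rw [hIq] at him0
      simp only [Complex.neg_re, Complex.neg_im, Complex.mul_re, Complex.mul_im,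
        Complex.I_re, Complex.I_im, Complex.ofReal_re, Complex.ofReal_im] at him0
      nlinarith [hν₀pos, him0]
    · have hδev : ∀ᶠ k in Filter.atTop, (∑ j, (ξ j : ℂ) * uf (t k) (Sum.inl j)) ≠ 0 :=
        hδlim.eventually_ne hαne
      have hνlim : Filter.Tendsto (fun k => ((νf (t k) : ℝ) : ℂ)) Filter.atTop
          (nhds (Complex.I * pv / αv)) := by
        have hdiv : Filter.Tendsto (fun k => Complex.I * (∑ j, (ξ j : ℂ)
            * (((2 * (xy (t k) (βf (t k))).1 j * (xy (t k) (βf (t k))).2 j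
              - βf (t k) * b j - 1 : ℝ) : ℂ) * uf (t k) (Sum.inl j)
            + ((βf (t k) * b j - 2 * (xy (t k) (βf (t k))).1 j
              * (xy (t k) (βf (t k))).2 j : ℝ) : ℂ) * uf (t k) (Sum.inr j)))
            / (∑ j, (ξ j : ℂ) * uf (t k) (Sum.inl j))) Filter.atTop
            (nhds (Complex.I * pv / αv)) :=
          (tendsto_const_nhds.mul hL1lim).div hδlim hαne
        apply Filter.Tendsto.congr' _ hdiv
        filter_upwards [hδev] with k hk
        rw [hid1 k, hIcalc, mul_div_assoc, div_self hk, mul_one]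
      set Vv : ℂ := Complex.I * pv / αv with hVdef
      have hVim : Vv.im = 0 :=
        tendsto_nhds_unique (((Complex.continuous_im.tendsto _).comp hνlim).congr
          (fun k => Complex.ofReal_im _)) tendsto_const_nhds
      have hVre : 0 ≤ Vv.re :=
        ge_of_tendsto ((Complex.continuous_re.tendsto _).comp hνlim)
          (Filter.Eventually.of_forall fun k => by
            simpa using (hpos _ ⟨(htmem k).1.le, (htmem k).2⟩).2.1.le)
      have hE1 : pv = (-(Complex.I * Vv)) * αv := by
        have h2 : Filter.Tendsto (fun k => (-(Complex.I * ((νf (t k) : ℝ) : ℂ)))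
            * (∑ j, (ξ j : ℂ) * uf (t k) (Sum.inl j))) Filter.atTop
            (nhds ((-(Complex.I * Vv)) * αv)) :=
          ((tendsto_const_nhds.mul hνlim).neg).mul hδlim
        exact tendsto_nhds_unique (hL1lim.congr (fun k => hid1 k)) h2
      have hE2 : qv = (-(Complex.I * Vv)) * γv := by
        have h2 : Filter.Tendsto (fun k => (-(Complex.I * ((νf (t k) : ℝ) : ℂ)))
            * (∑ j, (η j : ℂ) * uf (t k) (Sum.inr j))) Filter.atTop
            (nhds ((-(Complex.I * Vv)) * γv)) :=
          ((tendsto_const_nhds.mul hνlim).neg).mul hσlim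
        exact tendsto_nhds_unique (hL2lim.congr (fun k => hid2 k)) h2
      have hM10sum : ∑ j, ξ j * (2 * (c₀ * ξ j) * (r0 * η j) - βs * b j - 1)
          = βs * bb - 1 := by
        have e : ∀ j, ξ j * (2 * (c₀ * ξ j) * (r0 * η j) - βs * b j - 1)
            = 2 * (c₀ * r0) * (ξ j ^ 2 * η j) - βs * (b j * ξ j) - ξ j := fun j => by ring
        rw [Finset.sum_congr rfl (fun j _ => e j), Finset.sum_sub_distrib,
          Finset.sum_sub_distrib, ← Finset.mul_sum, ← Finset.mul_sum,
          ← hSdef, ← hbbdef, hξsum]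
        linear_combination 2 * hc₀r0S
      have hM30sum : ∑ j, ξ j * (βs * b j - 2 * (c₀ * ξ j) * (r0 * η j))
          = -(βs * bb) := by
        have e : ∀ j, ξ j * (βs * b j - 2 * (c₀ * ξ j) * (r0 * η j))
            = βs * (b j * ξ j) - 2 * (c₀ * r0) * (ξ j ^ 2 * η j) := fun j => by ring
        rw [Finset.sum_congr rfl (fun j _ => e j), Finset.sum_sub_distrib,
          ← Finset.mul_sum, ← Finset.mul_sum, ← hSdef, ← hbbdef]
        linear_combination -2 * hc₀r0S
      have hpval : pv = ((βs * bb - 1 : ℝ) : ℂ) * αv + ((-(βs * bb) : ℝ) : ℂ) * γv := by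
        calc pv = ∑ j, (ξ j : ℂ) * (((2 * (c₀ * ξ j) * (r0 * η j)
              - βs * b j - 1 : ℝ) : ℂ) * αv
            + ((βs * b j - 2 * (c₀ * ξ j) * (r0 * η j) : ℝ) : ℂ) * γv) := by
              rw [hpvdef]
              apply Finset.sum_congr rfl
              intro j _
              rw [hφa j, hψa j]
          _ = ((∑ j, ξ j * (2 * (c₀ * ξ j) * (r0 * η j) - βs * b j - 1) : ℝ) : ℂ) * αv
            + ((∑ j, ξ j * (βs * b j - 2 * (c₀ * ξ j) * (r0 * η j)) : ℝ) : ℂ) * γv := by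
              push_cast
              rw [Finset.sum_mul, Finset.sum_mul, ← Finset.sum_add_distrib]
              apply Finset.sum_congr rfl
              intro j _
              ring
          _ = ((βs * bb - 1 : ℝ) : ℂ) * αv + ((-(βs * bb) : ℝ) : ℂ) * γv := by
              rw [hM10sum, hM30sum]
      set ar : ℝ := αv.re with hardef
      have har : αv = (ar : ℂ) := by
        apply Complex.ext
        · simp [hardef]
        · simp [hαim]
      have harpos : 0 < ar := by
        rcases lt_or_eq_of_le hαre with h | h
        · exact h
        · exfalso
          apply hαne
          rw [har, ← h]
          simp
      set g1 : ℝ := γv.re with hg1def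
      set g2 : ℝ := γv.im with hg2def
      have hγ : γv = (g1 : ℂ) + (g2 : ℂ) * Complex.I := (Complex.re_add_im γv).symm
      set B : ℝ := βs * bb with hBdef
      set vr : ℝ := Vv.re with hvrdef
      have hVval : Vv = (vr : ℂ) := by
        apply Complex.ext
        · simp [hvrdef]
        · simp [hVim]
      have hE1' : (((B - 1) * ar - B * g1 : ℝ) : ℂ)
          + ((-(B * g2) + vr * ar : ℝ) : ℂ) * Complex.I = 0 := by
        have h := hE1
        rw [hpval, har, hγ, hVval] at h
        push_cast at h ⊢
        linear_combination h
      have r1 : (B - 1) * ar - B * g1 = 0 := by simpa using congrArg Complex.re hE1'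
      have i1 : -(B * g2) + vr * ar = 0 := by simpa using congrArg Complex.im hE1'
      have hE2' : ((ν₀ * ν₀ * ar - ν₀ * ν₀ * g1 - vr * g2 : ℝ) : ℂ)
          + ((-(ν₀ * ν₀ * g2) + vr * g1 : ℝ) : ℂ) * Complex.I = 0 := by
        have h := hE2
        rw [hqval, har, hγ, hVval] at h
        push_cast at h ⊢
        linear_combination h - (vr : ℂ) * (g2 : ℂ) * Complex.I_sq
      have r2 : ν₀ * ν₀ * ar - ν₀ * ν₀ * g1 - vr * g2 = 0 := by
        simpa using congrArg Complex.re hE2'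
      have i2 : -(ν₀ * ν₀ * g2) + vr * g1 = 0 := by simpa using congrArg Complex.im hE2'
      have key : ν₀ ^ 2 * ar = vr ^ 2 * ar := by
        linear_combination B * r2 - ν₀ ^ 2 * r1 - vr * i1
      have hvr2 : ν₀ ^ 2 = vr ^ 2 := mul_right_cancel₀ (ne_of_gt harpos) key
      have hvrnn : 0 ≤ vr := hVre
      have hvrval : vr = ν₀ := by
        have h3 : (vr - ν₀) * (vr + ν₀) = 0 := by linear_combination -hvr2
        rcases mul_eq_zero.1 h3 with h | h
        · linarith
        · linarith [hν₀pos]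
      rw [hvrval] at r2 i2
      have hg1v : g1 = ν₀ * g2 := by
        have h4 : ν₀ * (g1 - ν₀ * g2) = 0 := by linear_combination i2
        rcases mul_eq_zero.1 h4 with h | h
        · exact absurd h (ne_of_gt hν₀pos)
        · linarith
      have hg2e : g2 * (ν₀ ^ 2 + 1) = ν₀ * ar := by
        have h5 : ν₀ * (ν₀ * ar - (ν₀ ^ 2 + 1) * g2) = 0 := by
          linear_combination r2 + ν₀ ^ 2 * hg1v
        rcases mul_eq_zero.1 h5 with h | h
        · exact absurd h (ne_of_gt hν₀pos)
        · linarith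
      have hsl2 : ∑ j, Complex.normSq (ustar (Sum.inl j)) = (n : ℝ) * ar ^ 2 := by
        calc ∑ j, Complex.normSq (ustar (Sum.inl j)) = ∑ _j : Fin n, ar ^ 2 := by
              apply Finset.sum_congr rfl
              intro j _
              rw [hφa j, har, Complex.normSq_ofReal]
              ring
          _ = (n : ℝ) * ar ^ 2 := by
              rw [Finset.sum_const, Finset.card_univ, Fintype.card_fin, nsmul_eq_mul]
      have hsr2 : ∑ j, Complex.normSq (ustar (Sum.inr j))
          = (n : ℝ) * (g1 ^ 2 + g2 ^ 2) := by
        calc ∑ j, Complex.normSq (ustar (Sum.inr j)) = ∑ _j : Fin n, (g1 ^ 2 + g2 ^ 2) := by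
              apply Finset.sum_congr rfl
              intro j _
              rw [hψa j, Complex.normSq_apply, ← hg1def, ← hg2def]
              ring
          _ = (n : ℝ) * (g1 ^ 2 + g2 ^ 2) := by
              rw [Finset.sum_const, Finset.card_univ, Fintype.card_fin, nsmul_eq_mul]
      have hnorm2 : ar ^ 2 + (g1 ^ 2 + g2 ^ 2) = 2 := by
        rw [hsl2, hsr2] at hustarnorm
        have h6 : (n : ℝ) * (ar ^ 2 + (g1 ^ 2 + g2 ^ 2)) = (n : ℝ) * 2 := by linarith
        exact mul_left_cancel₀ (ne_of_gt hncast) h6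
      have har2 : ar ^ 2 * (2 * ν₀ ^ 2 + 1) = 2 * (ν₀ ^ 2 + 1) := by
        linear_combination (ν₀ ^ 2 + 1) * hnorm2 - (ν₀ ^ 2 + 1) * (g1 + ν₀ * g2) * hg1v
          - ((ν₀ ^ 2 + 1) * g2 + ν₀ * ar) * hg2e
      have hard0 : ar = d0 := by
        have h7 : (2 * ν₀ ^ 2 + 2) / (2 * ν₀ ^ 2 + 1) = ar ^ 2 := by
          rw [div_eq_iff (by positivity : (2 * ν₀ ^ 2 + 1 : ℝ) ≠ 0)]
          linarith
        rw [hd0def, h7, Real.sqrt_sq harpos.le]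
      have hg2v : g2 = s20 := by
        rw [hs20def, ← hard0, eq_div_iff (by positivity : (ν₀ ^ 2 + 1 : ℝ) ≠ 0)]
        linarith [hg2e]
      have hg1v2 : g1 = s10 := by
        rw [hs10def, ← hard0, eq_div_iff (by positivity : (ν₀ ^ 2 + 1 : ℝ) ≠ 0)]
        linear_combination ν₀ * hg2e + (ν₀ ^ 2 + 1) * hg1v
      funext i
      rcases i with j | j
      · simp only [huinfdef, Sum.elim_inl]
        rw [hφa j, har, hard0]
      · simp only [huinfdef, Sum.elim_inr]
        rw [hψa j, hγ, hg1v2, hg2v]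
  have hδten : Filter.Tendsto δt (nhdsWithin 0 (Set.Ioi 0)) (nhds d0) := by
    have hcont : Continuous (fun u : (Fin n ⊕ Fin n) → ℂ =>
        (∑ j, (ξ j : ℂ) * u (Sum.inl j)).re) :=
      Complex.continuous_re.comp (continuous_finset_sum _
        (fun j _ => continuous_const.mul (continuous_apply (Sum.inl j))))
    have hval : (∑ j, (ξ j : ℂ) * uinf (Sum.inl j)).re = d0 := by
      simp only [huinfdef, Sum.elim_inl]
      rw [← Finset.sum_mul, hξsumC, one_mul, Complex.ofReal_re]
    have h1 := (hcont.tendsto uinf).comp main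
    rw [← hval]
    exact h1.congr (fun lam => rfl)
  have hs1ten : Filter.Tendsto s1t (nhdsWithin 0 (Set.Ioi 0)) (nhds s10) := by
    have hcont : Continuous (fun u : (Fin n ⊕ Fin n) → ℂ =>
        (∑ j, (η j : ℂ) * u (Sum.inr j)).re) :=
      Complex.continuous_re.comp (continuous_finset_sum _
        (fun j _ => continuous_const.mul (continuous_apply (Sum.inr j))))
    have hval : (∑ j, (η j : ℂ) * uinf (Sum.inr j)).re = s10 := by
      simp only [huinfdef, Sum.elim_inr]
      rw [← Finset.sum_mul, hηsumC, one_mul]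
      simp
    have h1 := (hcont.tendsto uinf).comp main
    rw [← hval]
    exact h1.congr (fun lam => rfl)
  have hs2ten : Filter.Tendsto s2t (nhdsWithin 0 (Set.Ioi 0)) (nhds s20) := by
    have hcont : Continuous (fun u : (Fin n ⊕ Fin n) → ℂ =>
        (∑ j, (η j : ℂ) * u (Sum.inr j)).im) :=
      Complex.continuous_im.comp (continuous_finset_sum _
        (fun j _ => continuous_const.mul (continuous_apply (Sum.inr j))))
    have hval : (∑ j, (η j : ℂ) * uinf (Sum.inr j)).im = s20 := by
      simp only [huinfdef, Sum.elim_inr]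
      rw [← Finset.sum_mul, hηsumC, one_mul]
      simp
    have h1 := (hcont.tendsto uinf).comp main
    rw [← hval]
    exact h1.congr (fun lam => rfl)
  have hδtenC : Filter.Tendsto (fun lam => ((δt lam : ℝ) : ℂ)) (nhdsWithin 0 (Set.Ioi 0))
      (nhds ((d0 : ℝ) : ℂ)) := (Complex.continuous_ofReal.tendsto _).comp hδten
  have hs1tenC : Filter.Tendsto (fun lam => ((s1t lam : ℝ) : ℂ)) (nhdsWithin 0 (Set.Ioi 0))
      (nhds ((s10 : ℝ) : ℂ)) := (Complex.continuous_ofReal.tendsto _).comp hs1ten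
  have hs2tenC : Filter.Tendsto (fun lam => ((s2t lam : ℝ) : ℂ)) (nhdsWithin 0 (Set.Ioi 0))
      (nhds ((s20 : ℝ) : ℂ)) := (Complex.continuous_ofReal.tendsto _).comp hs2ten
  have hwten : Filter.Tendsto wt (nhdsWithin 0 (Set.Ioi 0)) (nhds 0) := by
    rw [tendsto_pi_nhds]
    intro j
    have h1 : Filter.Tendsto (fun lam => uf lam (Sum.inl j)) (nhdsWithin 0 (Set.Ioi 0))
        (nhds (uinf (Sum.inl j))) :=
      (((continuous_apply (Sum.inl j)).tendsto _).comp main).congr (fun lam => rfl)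
    have h2 := h1.sub hδtenC
    have h3 : uinf (Sum.inl j) - ((d0 : ℝ) : ℂ) = 0 := by
      simp [huinfdef]
    rw [h3] at h2
    simp only [Pi.zero_apply]
    exact h2.congr (fun lam => rfl)
  have hzten : Filter.Tendsto zt (nhdsWithin 0 (Set.Ioi 0)) (nhds 0) := by
    rw [tendsto_pi_nhds]
    intro j
    have h1 : Filter.Tendsto (fun lam => uf lam (Sum.inr j)) (nhdsWithin 0 (Set.Ioi 0))
        (nhds (uinf (Sum.inr j))) :=
      (((continuous_apply (Sum.inr j)).tendsto _).comp main).congr (fun lam => rfl)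
    have h2 : Filter.Tendsto (fun lam => uf lam (Sum.inr j)
        - (((s1t lam : ℝ) : ℂ) + ((s2t lam : ℝ) : ℂ) * Complex.I)) (nhdsWithin 0 (Set.Ioi 0))
        (nhds (uinf (Sum.inr j) - (((s10 : ℝ) : ℂ) + ((s20 : ℝ) : ℂ) * Complex.I))) :=
      h1.sub (hs1tenC.add (hs2tenC.mul tendsto_const_nhds))
    have h3 : uinf (Sum.inr j) - (((s10 : ℝ) : ℂ) + ((s20 : ℝ) : ℂ) * Complex.I) = 0 := by
      simp [huinfdef]
    rw [h3] at h2
    simp only [Pi.zero_apply]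
    exact h2.congr (fun lam => rfl)
  refine ⟨δt, s1t, s2t, wt, zt, ?_, ?_, ?_, ?_, ?_, ?_⟩
  · -- per-lam properties
    intro lam hmem
    obtain ⟨hu0, heqv, hspanv, hnormv, himv, hrev⟩ := hufP lam hmem
    have hsum1 : ∑ j, (ξ j : ℂ) * uf lam (Sum.inl j) = ((δt lam : ℝ) : ℂ) := by
      apply Complex.ext
      · simp [hδtdef]
      · simp [himv]
    have hsum2 : ∑ j, (η j : ℂ) * uf lam (Sum.inr j)
        = ((s1t lam : ℝ) : ℂ) + ((s2t lam : ℝ) : ℂ) * Complex.I := by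
      rw [hs1tdef, hs2tdef]
      exact (Complex.re_add_im _).symm
    refine ⟨hrev, ?_, ?_, ?_, ?_, ?_, ?_⟩
    · have h1 : ∑ j, (ξ j : ℂ) * wt lam j
          = (∑ j, (ξ j : ℂ) * uf lam (Sum.inl j))
            - (∑ j, (ξ j : ℂ)) * ((δt lam : ℝ) : ℂ) := by
        rw [Finset.sum_mul, ← Finset.sum_sub_distrib]
        apply Finset.sum_congr rfl
        intro j _
        rw [hwtdef]
        ring
      rw [h1, hsum1, hξsumC, one_mul, sub_self]
    · have h1 : ∑ j, (η j : ℂ) * zt lam j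
          = (∑ j, (η j : ℂ) * uf lam (Sum.inr j))
            - (∑ j, (η j : ℂ)) * (((s1t lam : ℝ) : ℂ) + ((s2t lam : ℝ) : ℂ) * Complex.I) := by
        rw [Finset.sum_mul, ← Finset.sum_sub_distrib]
        apply Finset.sum_congr rfl
        intro j _
        rw [hztdef]
        ring
      rw [h1, hsum2, hηsumC, one_mul, sub_self]
    · have e1 : ∀ j, ((δt lam : ℝ) : ℂ) + wt lam j = uf lam (Sum.inl j) := by
        intro j
        rw [hwtdef]
        ring
      have e2 : ∀ j, (((s1t lam : ℝ) : ℂ) + ((s2t lam : ℝ) : ℂ) * Complex.I) + zt lam j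
          = uf lam (Sum.inr j) := by
        intro j
        rw [hztdef]
        ring
      calc (∑ j, Complex.normSq (((δt lam : ℝ) : ℂ) + wt lam j))
            + (∑ j, Complex.normSq ((((s1t lam : ℝ) : ℂ)
              + ((s2t lam : ℝ) : ℂ) * Complex.I) + zt lam j))
          = (∑ j, Complex.normSq (uf lam (Sum.inl j)))
            + (∑ j, Complex.normSq (uf lam (Sum.inr j))) := by
            congr 1 <;> apply Finset.sum_congr rfl <;> intro j _
            · rw [e1 j]
            · rw [e2 j]
        _ = 2 * n := hnormv
    · rw [hvec lam]
      exact hu0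
    · rw [hvec lam]
      exact heqv
    · intro u' hu'
      rw [hvec lam]
      exact hspanv u' hu'
  · exact hδten
  · exact hs1ten
  · exact hs2ten
  · exact hwten
  · exact hzten
end

section
/- Let β₀ = 1 + (na)²(∑_{j=1}^n ξ_j³) be the limiting Hopf bifurcation value, denoted β₀^L when P is line-sum symmetric (∑_{k≠j} p_{jk} = ∑_{k≠j} p_{kj} for every j) and β₀^{NL} when P is not line-sum symmetric. Then β₀^L = 1 + a² and β₀^{NL} > 1 + a²; in particular β₀^L < β₀^{NL}. -/
open Finset

/-- Line-sum symmetry: for every `j`, the off-diagonal row sum equals the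
off-diagonal column sum. -/
def LineSumSym {n : ℕ} (P : Matrix (Fin n) (Fin n) ℝ) : Prop :=
  ∀ j, ∑ k ∈ Finset.univ.erase j, P j k = ∑ k ∈ Finset.univ.erase j, P k j

lemma cubic_identity (n : ℕ) (hn : 0 < n) (ξ : Fin n → ℝ) (hξsum : ∑ j, ξ j = 1) :
    ∑ j, (ξ j) ^ 3 = (∑ j, ((ξ j - 1/(n:ℝ))^2 * (ξ j + 2/(n:ℝ)))) + 1/(n:ℝ)^2 := by
  have hn0 : (n:ℝ) ≠ 0 := Nat.cast_ne_zero.mpr hn.ne'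
  have key : ∀ j : Fin n, (ξ j - 1/(n:ℝ))^2 * (ξ j + 2/(n:ℝ))
      = (ξ j)^3 - (3/(n:ℝ)^2) * ξ j + 2/(n:ℝ)^3 := by
    intro j; field_simp; ring
  rw [Finset.sum_congr rfl fun j _ => key j]
  rw [Finset.sum_add_distrib, Finset.sum_sub_distrib, ← Finset.mul_sum, hξsum,
    Finset.sum_const, Finset.card_univ, Fintype.card_fin, nsmul_eq_mul]
  field_simp
  ring

/-- The limiting Hopf bifurcation value `β₀ = 1 + (na)²(∑ ξⱼ³)` equals `1 + a²`
when the coupling matrix `P` is line-sum symmetric, and is strictly larger than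
`1 + a²` when `P` is not line-sum symmetric; in particular `β₀ᴸ < β₀ᴺᴸ`. -/
theorem stmt_14 (n : ℕ) (hn : 2 ≤ n) (a : ℝ) (ha : 0 < a)
    (P : Matrix (Fin n) (Fin n) ℝ)
    (hirr : MatIrred P) (hess : EssNonneg P) (hcol : ZeroColSums P)
    (ξ : Fin n → ℝ) (hξpos : ∀ j, 0 < ξ j) (hPξ : P.mulVec ξ = 0)
    (hξsum : ∑ j, ξ j = 1) :
    (LineSumSym P → 1 + ((n : ℝ) * a) ^ 2 * (∑ j, (ξ j) ^ 3) = 1 + a ^ 2) ∧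
    (¬ LineSumSym P → 1 + a ^ 2 < 1 + ((n : ℝ) * a) ^ 2 * (∑ j, (ξ j) ^ 3)) := by
  have hnpos : 0 < n := lt_of_lt_of_le (by norm_num) hn
  have hn0 : (n:ℝ) ≠ 0 := Nat.cast_ne_zero.mpr hnpos.ne'
  have hnR : (0:ℝ) < n := Nat.cast_pos.mpr hnpos
  have hrow : ∀ j, P.mulVec ξ j = 0 := fun j => congrFun hPξ j
  constructor
  · -- line-sum symmetric case
    intro hls
    -- row sums are zero
    have hrowsum : ∀ j, ∑ k, P j k = 0 := by
      intro j
      have h1 : ∑ k ∈ Finset.univ.erase j, P j k + P j j = ∑ k, P j k :=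
        Finset.sum_erase_add _ _ (Finset.mem_univ j)
      have h2 : ∑ k ∈ Finset.univ.erase j, P k j + P j j = ∑ k, P k j :=
        Finset.sum_erase_add _ _ (Finset.mem_univ j)
      have := hcol j
      have := hls j
      linarith
    -- ξ is constant, by a maximum principle
    obtain ⟨j₀, _, hmax⟩ := Finset.exists_max_image Finset.univ ξ ⟨⟨0, hnpos⟩, Finset.mem_univ _⟩
    set S : Finset (Fin n) := Finset.univ.filter (fun j => ξ j = ξ j₀) with hS
    have hSmem : ∀ j, j ∈ S ↔ ξ j = ξ j₀ := by
      intro j; simp [hS]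
    have hSuniv : S = Finset.univ := by
      by_contra hne
      have hScompl : (Finset.univ \ S).Nonempty := by
        rw [Finset.sdiff_nonempty]
        intro hsub
        exact hne (le_antisymm (Finset.subset_univ S) hsub)
      have hSc_ne : Finset.univ \ S ≠ Finset.univ := by
        intro h
        have : j₀ ∈ Finset.univ \ S := by rw [h]; exact Finset.mem_univ j₀
        rw [Finset.mem_sdiff] at this
        exact this.2 ((hSmem j₀).mpr rfl)
      obtain ⟨j, hjn, k, hk, hPjk⟩ := hirr (Finset.univ \ S) hScompl hSc_ne
      have hjS : j ∈ S := by
        by_contra hjS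
        exact hjn (Finset.mem_sdiff.mpr ⟨Finset.mem_univ j, hjS⟩)
      have hkS : k ∉ S := (Finset.mem_sdiff.mp hk).2
      have hjmax : ξ j = ξ j₀ := (hSmem j).mp hjS
      -- ∑ k, P j k * (ξ k - ξ j) = 0
      have hsum0 : ∑ k', P j k' * (ξ k' - ξ j) = 0 := by
        have h1 : ∑ k', P j k' * ξ k' = 0 := hrow j
        have h2 : ∑ k', P j k' * ξ j = 0 := by
          rw [← Finset.sum_mul, hrowsum j, zero_mul]
        calc ∑ k', P j k' * (ξ k' - ξ j)
            = ∑ k', (P j k' * ξ k' - P j k' * ξ j) := by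
              refine Finset.sum_congr rfl fun k' _ => by ring
          _ = 0 := by rw [Finset.sum_sub_distrib, h1, h2, sub_zero]
      have hnonpos : ∀ k' ∈ Finset.univ, P j k' * (ξ k' - ξ j) ≤ 0 := by
        intro k' _
        rcases eq_or_ne j k' with h | h
        · simp [h]
        · have h1 : 0 ≤ P j k' := hess j k' h
          have h2 : ξ k' - ξ j ≤ 0 := by
            have := hmax k' (Finset.mem_univ k')
            rw [hjmax]; linarith
          exact mul_nonpos_of_nonneg_of_nonpos h1 h2
      have hall := (Finset.sum_eq_zero_iff_of_nonpos hnonpos).mp hsum0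
      have hterm := hall k (Finset.mem_univ k)
      have : ξ k - ξ j = 0 := by
        rcases mul_eq_zero.mp hterm with h | h
        · exact absurd h hPjk
        · exact h
      exact hkS ((hSmem k).mpr (by linarith))
    have hconst : ∀ j, ξ j = ξ j₀ := fun j => (hSmem j).mp (hSuniv ▸ Finset.mem_univ j)
    have hval : ξ j₀ = 1 / (n:ℝ) := by
      have : ∑ j, ξ j = (n:ℝ) * ξ j₀ := by
        calc ∑ j, ξ j = ∑ _j : Fin n, ξ j₀ := Finset.sum_congr rfl fun j _ => hconst j
          _ = (n:ℝ) * ξ j₀ := by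
              rw [Finset.sum_const, Finset.card_univ, Fintype.card_fin, nsmul_eq_mul]
      rw [this] at hξsum
      field_simp
      linarith
    have hsum3 : ∑ j, (ξ j) ^ 3 = 1 / (n:ℝ)^2 := by
      calc ∑ j, (ξ j) ^ 3 = ∑ _j : Fin n, (1/(n:ℝ))^3 :=
            Finset.sum_congr rfl fun j _ => by rw [hconst j, hval]
        _ = 1 / (n:ℝ)^2 := by
            rw [Finset.sum_const, Finset.card_univ, Fintype.card_fin, nsmul_eq_mul]
            field_simp
    rw [hsum3]
    field_simp
  · -- non-line-sum-symmetric case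
    intro hnls
    -- ξ is not constant equal to 1/n
    have hnotconst : ∃ j, ξ j ≠ 1/(n:ℝ) := by
      by_contra h
      push_neg at h
      apply hnls
      -- all ξ j = 1/n ⇒ row sums zero ⇒ line-sum symmetric
      have hrowsum : ∀ j, ∑ k, P j k = 0 := by
        intro j
        have h1 := hrow j
        have : ∑ k, P j k * (1/(n:ℝ)) = 0 := by
          rw [← h1]
          exact Finset.sum_congr rfl fun k _ => by rw [h k]
        rw [← Finset.sum_mul] at this
        have := mul_eq_zero.mp this
        rcases this with h' | h'
        · exact h'
        · exact absurd h' (by positivity)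
      intro j
      have h1 : ∑ k ∈ Finset.univ.erase j, P j k + P j j = ∑ k, P j k :=
        Finset.sum_erase_add _ _ (Finset.mem_univ j)
      have h2 : ∑ k ∈ Finset.univ.erase j, P k j + P j j = ∑ k, P k j :=
        Finset.sum_erase_add _ _ (Finset.mem_univ j)
      have := hcol j
      have := hrowsum j
      linarith
    obtain ⟨j₀, hj₀⟩ := hnotconst
    have hid := cubic_identity n hnpos ξ hξsum
    have hpos : 0 < ∑ j, ((ξ j - 1/(n:ℝ))^2 * (ξ j + 2/(n:ℝ))) := by
      apply Finset.sum_pos'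
      · intro j _
        have : 0 < ξ j + 2/(n:ℝ) := by
          have := hξpos j; positivity
        positivity
      · refine ⟨j₀, Finset.mem_univ j₀, ?_⟩
        have h1 : 0 < (ξ j₀ - 1/(n:ℝ))^2 :=
          pow_two_pos_of_ne_zero (sub_ne_zero.mpr hj₀)
        have h2 : 0 < ξ j₀ + 2/(n:ℝ) := by
          have := hξpos j₀; positivity
        exact mul_pos h1 h2
    have hgt : 1/(n:ℝ)^2 < ∑ j, (ξ j)^3 := by rw [hid]; linarith
    have : a^2 < ((n:ℝ)*a)^2 * (∑ j, (ξ j)^3) := by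
      have h2 : ((n:ℝ)*a)^2 * (1/(n:ℝ)^2) = a^2 := by field_simp
      calc a^2 = ((n:ℝ)*a)^2 * (1/(n:ℝ)^2) := h2.symm
        _ < ((n:ℝ)*a)^2 * (∑ j, (ξ j)^3) := by
            apply mul_lt_mul_of_pos_left hgt (by positivity)
    linarith
end
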